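/- For the weighted 1-D fused lasso with input y ∈ ℝⁿ and nonnegative weights α, the number of distinct linear segments of the solution path γ ↦ x*(γ) is at most 8·C(n,2) + 1 = O(n²). -/

import Mathlib

/-- Objective of the weighted 1-D fused lasso on an input of size `n+1`. -/
noncomputable def fusedObj (n : ℕ) (y : Fin (n + 1) → ℝ) (α : Fin n → ℝ) (γ : ℝ)
    (x : Fin (n + 1) → ℝ) : ℝ :=
  (1 / 2) * ∑ t, (x t - y t) ^ 2 + γ * ∑ t : Fin n, α t * |x t.succ - x t.castSucc|

namespace FL

open Finset

variable (n : ℕ) (y : Fin (n + 1) → ℝ) (α : Fin n → ℝ)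

noncomputable def yv : ℕ → ℝ := fun u => if h : u < n + 1 then y ⟨u, h⟩ else 0

noncomputable def av : ℕ → ℝ := fun m => if h : 1 ≤ m ∧ m ≤ n then α ⟨m - 1, by omega⟩ else 0

noncomputable def Wf (x : ℕ → ℝ) (m : ℕ) : ℝ := ∑ u ∈ range m, (x u - yv n y u)

noncomputable def Pen (x : ℕ → ℝ) : ℝ := ∑ t ∈ range n, av n α (t+1) * |x (t+1) - x t|

noncomputable def Obj (γ : ℝ) (x : ℕ → ℝ) : ℝ :=
  (∑ u ∈ range (n+1), (x u - yv n y u)^2) / 2 + γ * Pen n α x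

def IsMin (γ : ℝ) (x : ℕ → ℝ) : Prop := ∀ v, Obj n y α γ x ≤ Obj n y α γ v

def KKT (γ : ℝ) (x : ℕ → ℝ) : Prop :=
  Wf n y x (n+1) = 0 ∧ ∀ m, 1 ≤ m → m ≤ n →
    |Wf n y x m| ≤ γ * av n α m ∧
    (x (m-1) < x m → Wf n y x m = γ * av n α m) ∧
    (x m < x (m-1) → Wf n y x m = -(γ * av n α m))

variable {n y α}

lemma av_nonneg (hα : ∀ t, 0 ≤ α t) (m : ℕ) : 0 ≤ av n α m := by
  unfold av; split <;> simp [hα]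

lemma av_zero_of_gt {m : ℕ} (h : n < m) : av n α m = 0 := by
  unfold av; rw [dif_neg]; omega

lemma pen_nonneg (hα : ∀ t, 0 ≤ α t) (x : ℕ → ℝ) : 0 ≤ Pen n α x := by
  apply Finset.sum_nonneg
  intro t _
  exact mul_nonneg (av_nonneg hα _) (abs_nonneg _)

/-- The objective matches `fusedObj` through restriction. -/
lemma obj_eq_fusedObj (γ : ℝ) (v : ℕ → ℝ) :
    Obj n y α γ v = fusedObj n y α γ (fun t => v t.val) := by
  unfold Obj fusedObj Pen
  have h1 : (∑ t : Fin (n+1), ((fun t : Fin (n+1) => v t.val) t - y t) ^ 2)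
      = ∑ u ∈ range (n+1), (v u - yv n y u)^2 := by
    rw [← Fin.sum_univ_eq_sum_range (fun u => (v u - yv n y u)^2) (n+1)]
    apply Finset.sum_congr rfl
    intro t _
    simp [yv, t.isLt]
  have h2 : (∑ t : Fin n, α t * |(fun t : Fin (n+1) => v t.val) t.succ -
      (fun t : Fin (n+1) => v t.val) t.castSucc|)
      = ∑ t ∈ range n, av n α (t+1) * |v (t+1) - v t| := by
    rw [← Fin.sum_univ_eq_sum_range (fun u => av n α (u+1) * |v (u+1) - v u|) n]
    apply Finset.sum_congr rfl
    intro t _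
    have : av n α (t.val+1) = α t := by
      unfold av
      rw [dif_pos ⟨by omega, by omega⟩]
      exact congrArg α (Fin.ext (by simp))
    simp only [Fin.val_succ, Fin.coe_castSucc, this]
  rw [h1, h2]
  ring

lemma abel (W e : ℕ → ℝ) (N : ℕ) :
    ∑ u ∈ range N, (W (u+1) - W u) * e u
      = W N * e N - W 0 * e 0 - ∑ u ∈ range N, W (u+1) * (e (u+1) - e u) := by
  have tele : ∑ u ∈ range N, (W (u+1) * e (u+1) - W u * e u) = W N * e N - W 0 * e 0 :=
    Finset.sum_range_sub (fun u => W u * e u) N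
  have : ∑ u ∈ range N, (W (u+1) - W u) * e u
      = ∑ u ∈ range N, ((W (u+1) * e (u+1) - W u * e u) - W (u+1) * (e (u+1) - e u)) := by
    apply Finset.sum_congr rfl; intro u _; ring
  rw [this, Finset.sum_sub_distrib, tele]

lemma isMin_of_kkt (hα : ∀ t, 0 ≤ α t) {γ : ℝ} (hγ : 0 ≤ γ) {x : ℕ → ℝ}
    (hk : KKT n y α γ x) (v : ℕ → ℝ) :
    Obj n y α γ x + (∑ u ∈ range (n+1), (v u - x u)^2) / 2 ≤ Obj n y α γ v := by
  obtain ⟨hW, hm⟩ := hk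
  have key : Obj n y α γ v - Obj n y α γ x - (∑ u ∈ range (n+1), (v u - x u)^2) / 2
      = ∑ t ∈ range n, ((γ * av n α (t+1) * |v (t+1) - v t| - Wf n y x (t+1) * (v (t+1) - v t))
        - (γ * av n α (t+1) * |x (t+1) - x t| - Wf n y x (t+1) * (x (t+1) - x t))) := by
    have hquad : ∑ u ∈ range (n+1), (v u - yv n y u)^2
        = ∑ u ∈ range (n+1), ((x u - yv n y u)^2 + 2*(x u - yv n y u)*(v u - x u) + (v u - x u)^2) := by
      apply Finset.sum_congr rfl; intro u _; ring
    have hcross : ∑ u ∈ range (n+1), (x u - yv n y u)*(v u - x u)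
        = - ∑ t ∈ range n, Wf n y x (t+1) * ((v (t+1) - x (t+1)) - (v t - x t)) := by
      have hWd : ∀ u, x u - yv n y u = Wf n y x (u+1) - Wf n y x u := by
        intro u
        have := Finset.sum_range_succ (fun u => x u - yv n y u) u
        unfold Wf; rw [this]; ring
      have h0 : ∑ u ∈ range (n+1), (x u - yv n y u)*(v u - x u)
          = ∑ u ∈ range (n+1), (Wf n y x (u+1) - Wf n y x u) * ((fun u => v u - x u) u) := by
        apply Finset.sum_congr rfl; intro u _; rw [hWd u]
      rw [h0, abel]
      have hW0 : Wf n y x 0 = 0 := by unfold Wf; simp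
      rw [hW, hW0]
      rw [Finset.sum_range_succ]
      rw [hW]
      ring
    unfold Obj Pen
    rw [hquad, Finset.sum_add_distrib, Finset.sum_add_distrib]
    have h2 : ∑ u ∈ range (n+1), 2*(x u - yv n y u)*(v u - x u)
        = 2 * ∑ u ∈ range (n+1), (x u - yv n y u)*(v u - x u) := by
      rw [Finset.mul_sum]; apply Finset.sum_congr rfl; intro u _; ring
    rw [h2, hcross]
    have hsplit : ∑ t ∈ range n, ((γ * av n α (t+1) * |v (t+1) - v t| - Wf n y x (t+1) * (v (t+1) - v t))
        - (γ * av n α (t+1) * |x (t+1) - x t| - Wf n y x (t+1) * (x (t+1) - x t)))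
        = (∑ t ∈ range n, γ * (av n α (t+1) * |v (t+1) - v t|))
          - (∑ t ∈ range n, γ * (av n α (t+1) * |x (t+1) - x t|))
          - ∑ t ∈ range n, Wf n y x (t+1) * (v (t+1) - x (t+1) - (v t - x t)) := by
      rw [← Finset.sum_sub_distrib, ← Finset.sum_sub_distrib]
      apply Finset.sum_congr rfl; intro t _; ring
    rw [hsplit, Finset.mul_sum, Finset.mul_sum]
    ring
  have hterm : ∀ t ∈ range n,
      0 ≤ ((γ * av n α (t+1) * |v (t+1) - v t| - Wf n y x (t+1) * (v (t+1) - v t))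
        - (γ * av n α (t+1) * |x (t+1) - x t| - Wf n y x (t+1) * (x (t+1) - x t))) := by
    intro t ht
    have h1 : 1 ≤ t + 1 := by omega
    have h2 : t + 1 ≤ n := by simp at ht; omega
    obtain ⟨htube, hpos, hneg⟩ := hm (t+1) h1 h2
    have hts : t + 1 - 1 = t := by omega
    rw [hts] at hpos hneg
    have hb1 : Wf n y x (t+1) * (v (t+1) - v t) ≤ γ * av n α (t+1) * |v (t+1) - v t| := by
      calc Wf n y x (t+1) * (v (t+1) - v t) ≤ |Wf n y x (t+1) * (v (t+1) - v t)| := le_abs_self _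
      _ = |Wf n y x (t+1)| * |v (t+1) - v t| := abs_mul _ _
      _ ≤ (γ * av n α (t+1)) * |v (t+1) - v t| := by
          apply mul_le_mul_of_nonneg_right htube (abs_nonneg _)
    have hb2 : γ * av n α (t+1) * |x (t+1) - x t| - Wf n y x (t+1) * (x (t+1) - x t) = 0 := by
      rcases lt_trichotomy (x t) (x (t+1)) with h | h | h
      · rw [hpos h, abs_of_pos (by linarith)]; ring
      · rw [← h]; simp
      · rw [hneg h, abs_of_neg (by linarith)]; ring
    linarith
  have := Finset.sum_nonneg hterm
  rw [← key] at this
  linarith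

lemma obj_shift_total (γ ε : ℝ) (x : ℕ → ℝ) :
    Obj n y α γ (fun u => x u - ε)
      = Obj n y α γ x - ε * Wf n y x (n+1) + (n+1)*ε^2/2 := by
  unfold Obj Pen Wf
  have hq : ∑ u ∈ range (n+1), ((x u - ε) - yv n y u)^2
      = ∑ u ∈ range (n+1), ((x u - yv n y u)^2 + (-2*ε*(x u - yv n y u) + ε^2)) := by
    apply Finset.sum_congr rfl; intro u _; ring
  rw [hq, Finset.sum_add_distrib, Finset.sum_add_distrib]
  have h1 : ∑ u ∈ range (n+1), -2*ε*(x u - yv n y u) = -2*ε*∑ u ∈ range (n+1), (x u - yv n y u) := by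
    rw [Finset.mul_sum]
  have h2 : ∑ _u ∈ range (n+1), (ε:ℝ)^2 = (n+1)*ε^2 := by
    rw [Finset.sum_const, Finset.card_range]; push_cast; ring
  have h3 : (∑ t ∈ range n, av n α (t+1) * |(fun u => x u - ε) (t+1) - (fun u => x u - ε) t|)
      = ∑ t ∈ range n, av n α (t+1) * |x (t+1) - x t| := by
    apply Finset.sum_congr rfl; intro t _
    congr 1; congr 1; ring
  rw [h1, h2, h3]
  ring

lemma obj_shift (γ ε : ℝ) (x : ℕ → ℝ) {m : ℕ} (h1 : 1 ≤ m) (h2 : m ≤ n) :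
    Obj n y α γ (fun u => if u < m then x u - ε else x u)
      = Obj n y α γ x - ε * Wf n y x m + m*ε^2/2
        + γ * (av n α m * (|x m - x (m-1) + ε| - |x m - x (m-1)|)) := by
  set v : ℕ → ℝ := fun u => if u < m then x u - ε else x u with hv
  have hq : ∑ u ∈ range (n+1), (v u - yv n y u)^2
      = ∑ u ∈ range (n+1), ((x u - yv n y u)^2 + (if u < m then (-2*ε*(x u - yv n y u) + ε^2) else 0)) := by
    apply Finset.sum_congr rfl; intro u _
    by_cases h : u < m
    · simp only [hv, if_pos h]; ring
    · simp only [hv, if_neg h]; ring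
  have hfil : (range (n+1)).filter (fun u => u < m) = range m := by
    ext a; simp; omega
  have hq2 : ∑ u ∈ range (n+1), (if u < m then (-2*ε*(x u - yv n y u) + ε^2) else 0)
      = -2*ε*Wf n y x m + m*ε^2 := by
    rw [← Finset.sum_filter, hfil, Finset.sum_add_distrib]
    have ha : ∑ u ∈ range m, -2*ε*(x u - yv n y u) = -2*ε*Wf n y x m := by
      unfold Wf; rw [Finset.mul_sum]
    have hb : ∑ _u ∈ range m, (ε:ℝ)^2 = m*ε^2 := by
      rw [Finset.sum_const, Finset.card_range]; push_cast; ring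
    rw [ha, hb]
  have hp : ∑ t ∈ range n, av n α (t+1) * |v (t+1) - v t|
      = ∑ t ∈ range n, (av n α (t+1) * |x (t+1) - x t|
          + (if t = m - 1 then av n α m * (|x m - x (m-1) + ε| - |x m - x (m-1)|) else 0)) := by
    apply Finset.sum_congr rfl; intro t _
    by_cases h : t = m - 1
    · subst h
      have hm' : m - 1 + 1 = m := by omega
      rw [if_pos rfl, hm']
      have hlt : m - 1 < m := by omega
      have hnlt : ¬ (m < m) := by omega
      simp only [hv, if_neg hnlt, if_pos hlt]
      have hre : x m - (x (m-1) - ε) = x m - x (m-1) + ε := by ring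
      rw [hre]; ring
    · rw [if_neg h, add_zero]
      by_cases h' : t + 1 < m
      · have hlt : t < m := by omega
        simp only [hv, if_pos hlt, if_pos h']
        congr 2; ring
      · have hnlt : ¬ (t < m) := by omega
        simp only [hv, if_neg hnlt, if_neg h']
  have hsingle : ∑ t ∈ range n, (if t = m - 1 then av n α m * (|x m - x (m-1) + ε| - |x m - x (m-1)|) else 0)
      = av n α m * (|x m - x (m-1) + ε| - |x m - x (m-1)|) := by
    rw [Finset.sum_ite_eq' (range n) (m-1) (fun _ => av n α m * (|x m - x (m-1) + ε| - |x m - x (m-1)|))]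
    rw [if_pos]
    simp; omega
  unfold Obj Pen
  rw [hq, Finset.sum_add_distrib, hq2, hp, Finset.sum_add_distrib, hsingle]
  ring

lemma kkt_of_isMin (hα : ∀ t, 0 ≤ α t) {γ : ℝ} (hγ : 0 ≤ γ) {x : ℕ → ℝ}
    (hmin : IsMin n y α γ x) : KKT n y α γ x := by
  constructor
  · by_contra h
    set W := Wf n y x (n+1) with hW
    set ε := W / (n+1) with hε
    have := hmin (fun u => x u - ε)
    rw [obj_shift_total] at this
    have hn : (0:ℝ) < (n:ℝ)+1 := by positivity
    have hε2 : ε * ((n:ℝ)+1) = W := by rw [hε]; field_simp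
    have hW2 : 0 < W^2 := by
      rcases lt_or_gt_of_ne h with h' | h' <;> nlinarith
    have hεW : ε * W = W^2/((n:ℝ)+1) := by rw [hε]; ring
    have hc : ((n:ℝ)+1)*ε^2 = ε*W := by
      have : ((n:ℝ)+1)*ε^2 = (ε*((n:ℝ)+1))*ε := by ring
      rw [this, hε2]; ring
    have hpos : 0 < ε * W := by rw [hεW]; positivity
    linarith
  · intro m hm1 hm2
    set W := Wf n y x m with hWdef
    set A := γ * av n α m with hA
    have hA0 : 0 ≤ A := mul_nonneg hγ (av_nonneg hα m)
    have hmR : (0:ℝ) < m := by positivity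
    have htube : |W| ≤ A := by
      by_contra h
      push_neg at h
      set δ := (|W| - A)/m with hδ
      have hδ0 : 0 < δ := by apply div_pos; linarith; exact hmR
      set ε := (if 0 < W then δ else -δ) with hε
      have hεW : ε * W = δ * |W| := by
        rcases le_or_gt W 0 with h0 | h0
        · rw [hε, if_neg (not_lt.mpr h0), abs_of_nonpos h0]; ring
        · rw [hε, if_pos h0, abs_of_pos h0]
      have hεabs : |ε| = δ := by
        rw [hε]; split
        · exact abs_of_pos hδ0
        · rw [abs_neg]; exact abs_of_pos hδ0
      have := hmin (fun u => if u < m then x u - ε else x u)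
      rw [obj_shift γ ε x hm1 hm2] at this
      have habs : |x m - x (m-1) + ε| - |x m - x (m-1)| ≤ |ε| := by
        have := abs_add_le (x m - x (m-1)) ε
        linarith
      have hpen : γ * (av n α m * (|x m - x (m-1) + ε| - |x m - x (m-1)|)) ≤ A * δ := by
        rw [hεabs] at habs
        calc γ * (av n α m * (|x m - x (m-1) + ε| - |x m - x (m-1)|))
            ≤ γ * (av n α m * δ) := by
              apply mul_le_mul_of_nonneg_left _ hγ
              exact mul_le_mul_of_nonneg_left habs (av_nonneg hα m)
          _ = A * δ := by rw [hA]; ring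
      have hεsq : ε^2 = δ^2 := by
        rw [hε]; split <;> ring
      have hfin : 0 ≤ - (δ * |W|) + m*δ^2/2 + A * δ := by
        have h0 : Obj n y α γ x ≤ Obj n y α γ x - ε*W + m*ε^2/2
            + γ * (av n α m * (|x m - x (m-1) + ε| - |x m - x (m-1)|)) := this
        rw [hεW, hεsq] at h0
        linarith
      have hδm : δ * m = |W| - A := by rw [hδ]; field_simp
      nlinarith [hδ0, hfin]
    refine ⟨htube, ?_, ?_⟩
    · intro hjump
      by_contra hne
      have hlt : W < A := lt_of_le_of_ne (le_trans (le_abs_self W) htube) hne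
      set Δ := x m - x (m-1) with hΔ
      have hΔ0 : 0 < Δ := by rw [hΔ]; linarith
      set δ := min (Δ/2) ((A - W)/m) with hδ
      have hδ0 : 0 < δ := by
        apply lt_min
        · linarith
        · apply div_pos; linarith; exact hmR
      have := hmin (fun u => if u < m then x u - (-δ) else x u)
      rw [obj_shift γ (-δ) x hm1 hm2] at this
      have habs1 : |Δ + -δ| = Δ - δ := by
        rw [abs_of_pos]
        · ring
        · have : δ ≤ Δ/2 := min_le_left _ _
          linarith
      have habs2 : |Δ| = Δ := abs_of_pos hΔ0
      rw [← hΔ, habs1, habs2] at this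
      have hkey : 0 ≤ δ*W + m*δ^2/2 + A*(-δ) := by nlinarith
      have hδm : δ * m ≤ A - W := by
        have : δ ≤ (A - W)/m := min_le_right _ _
        calc δ * m ≤ ((A-W)/m) * m := by apply mul_le_mul_of_nonneg_right this (le_of_lt hmR)
        _ = A - W := by field_simp
      nlinarith
    · intro hjump
      by_contra hne
      have hlt : -A < W := by
        rcases lt_or_eq_of_le (neg_le_of_abs_le htube) with h | h
        · exact h
        · exact absurd h.symm hne
      set Δ := x m - x (m-1) with hΔ
      have hΔ0 : Δ < 0 := by rw [hΔ]; linarith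
      set δ := min (-Δ/2) ((W + A)/m) with hδ
      have hδ0 : 0 < δ := by
        apply lt_min
        · linarith
        · apply div_pos; linarith; exact hmR
      have := hmin (fun u => if u < m then x u - δ else x u)
      rw [obj_shift γ δ x hm1 hm2] at this
      have habs1 : |Δ + δ| = -(Δ + δ) := by
        rw [abs_of_neg]
        have : δ ≤ -Δ/2 := min_le_left _ _
        linarith
      have habs2 : |Δ| = -Δ := abs_of_neg hΔ0
      rw [← hΔ, habs1, habs2] at this
      have hkey : 0 ≤ -(δ*W) + m*δ^2/2 - A*δ := by nlinarith
      have hδm : δ * m ≤ W + A := by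
        have : δ ≤ (W + A)/m := min_le_right _ _
        calc δ * m ≤ ((W+A)/m) * m := by apply mul_le_mul_of_nonneg_right this (le_of_lt hmR)
        _ = W + A := by field_simp
      nlinarith

lemma midpoint_obj (hα : ∀ t, 0 ≤ α t) {γ : ℝ} (hγ : 0 ≤ γ) (x v : ℕ → ℝ) :
    Obj n y α γ (fun u => (x u + v u)/2)
      ≤ Obj n y α γ x / 2 + Obj n y α γ v / 2 - (∑ u ∈ range (n+1), (v u - x u)^2)/8 := by
  unfold Obj
  have hq : ∑ u ∈ range (n+1), ((fun u => (x u + v u)/2) u - yv n y u)^2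
      = ∑ u ∈ range (n+1), ((x u - yv n y u)^2/2 + (v u - yv n y u)^2/2 - (v u - x u)^2/4) := by
    apply Finset.sum_congr rfl; intro u _; ring
  have hp : Pen n α (fun u => (x u + v u)/2) ≤ Pen n α x / 2 + Pen n α v / 2 := by
    unfold Pen
    have step : ∑ t ∈ range n, av n α (t+1) * |(fun u => (x u + v u)/2) (t+1) - (fun u => (x u + v u)/2) t|
        ≤ ∑ t ∈ range n, ((av n α (t+1) * |x (t+1) - x t|)/2 + (av n α (t+1) * |v (t+1) - v t|)/2) := by
      apply Finset.sum_le_sum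
      intro t _
      have habs : |(x (t+1) + v (t+1))/2 - (x t + v t)/2| ≤ (|x (t+1) - x t| + |v (t+1) - v t|)/2 := by
        have h0 : (x (t+1) + v (t+1))/2 - (x t + v t)/2 = ((x (t+1) - x t) + (v (t+1) - v t))/2 := by
          ring
        rw [h0, abs_div, abs_of_pos (by norm_num : (0:ℝ) < 2)]
        have := abs_add_le (x (t+1) - x t) (v (t+1) - v t)
        linarith
      calc av n α (t+1) * |(fun u => (x u + v u)/2) (t+1) - (fun u => (x u + v u)/2) t|
          = av n α (t+1) * |(x (t+1) + v (t+1))/2 - (x t + v t)/2| := rfl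
        _ ≤ av n α (t+1) * ((|x (t+1) - x t| + |v (t+1) - v t|)/2) :=
            mul_le_mul_of_nonneg_left habs (av_nonneg hα _)
        _ = (av n α (t+1) * |x (t+1) - x t|)/2 + (av n α (t+1) * |v (t+1) - v t|)/2 := by ring
    have hsum : ∑ t ∈ range n, ((av n α (t+1) * |x (t+1) - x t|)/2 + (av n α (t+1) * |v (t+1) - v t|)/2)
        = (∑ t ∈ range n, av n α (t+1) * |x (t+1) - x t|)/2
          + (∑ t ∈ range n, av n α (t+1) * |v (t+1) - v t|)/2 := by
      rw [Finset.sum_add_distrib, ← Finset.sum_div, ← Finset.sum_div]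
    rw [← hsum]
    exact step
  have hγp : γ * Pen n α (fun u => (x u + v u)/2) ≤ γ * (Pen n α x / 2 + Pen n α v / 2) :=
    mul_le_mul_of_nonneg_left hp hγ
  have hsplit : ∑ u ∈ range (n+1), ((x u - yv n y u)^2/2 + (v u - yv n y u)^2/2 - (v u - x u)^2/4)
      = (∑ u ∈ range (n+1), (x u - yv n y u)^2)/2 + (∑ u ∈ range (n+1), (v u - yv n y u)^2)/2
        - (∑ u ∈ range (n+1), (v u - x u)^2)/4 := by
    rw [Finset.sum_sub_distrib, Finset.sum_add_distrib, ← Finset.sum_div, ← Finset.sum_div,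
      ← Finset.sum_div]
  rw [hq, hsplit]
  linarith

lemma isMin_unique (hα : ∀ t, 0 ≤ α t) {γ : ℝ} (hγ : 0 ≤ γ) {x v : ℕ → ℝ}
    (h1 : IsMin n y α γ x) (h2 : IsMin n y α γ v) : ∀ u, u < n+1 → x u = v u := by
  have hmid := midpoint_obj (y := y) hα hγ x v
  have ha := h1 (fun u => (x u + v u)/2)
  have hb := h1 v
  have hc := h2 x
  have hS : ∑ u ∈ range (n+1), (v u - x u)^2 ≤ 0 := by linarith
  have hS0 : ∑ u ∈ range (n+1), (v u - x u)^2 = 0 :=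
    le_antisymm hS (Finset.sum_nonneg fun u _ => sq_nonneg _)
  intro u hu
  have := (Finset.sum_eq_zero_iff_of_nonneg (fun u _ => sq_nonneg (v u - x u))).mp hS0 u
    (Finset.mem_range.mpr hu)
  have := sq_eq_zero_iff.mp this
  linarith

lemma pen_min_le (hα : ∀ t, 0 ≤ α t) {γ : ℝ} (hγ : 0 ≤ γ) {x : ℕ → ℝ}
    (hmin : IsMin n y α γ x) : Pen n α x ≤ Pen n α (yv n y) := by
  have hobj := hmin (yv n y)
  rcases lt_or_eq_of_le hγ with h | h
  · unfold Obj at hobj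
    have hz : ∑ u ∈ range (n+1), (yv n y u - yv n y u)^2 = 0 := by simp
    rw [hz] at hobj
    have hq : 0 ≤ (∑ u ∈ range (n+1), (x u - yv n y u)^2)/2 := by positivity
    have hmul : γ * Pen n α x ≤ γ * Pen n α (yv n y) := by linarith
    exact le_of_mul_le_mul_left hmul h
  · -- γ = 0 : x agrees with yv on range (n+1)
    have hγ0 : γ = 0 := h.symm
    have hq : ∑ u ∈ range (n+1), (x u - yv n y u)^2 ≤ 0 := by
      unfold Obj at hobj
      rw [hγ0] at hobj
      simp at hobj
      nlinarith [pen_nonneg hα x, hobj]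
    have hq0 : ∀ u, u < n+1 → x u = yv n y u := by
      intro u hu
      have h0 : ∑ u ∈ range (n+1), (x u - yv n y u)^2 = 0 :=
        le_antisymm hq (Finset.sum_nonneg fun u _ => sq_nonneg _)
      have := (Finset.sum_eq_zero_iff_of_nonneg (fun u _ => sq_nonneg _)).mp h0 u
        (Finset.mem_range.mpr hu)
      have := sq_eq_zero_iff.mp this
      linarith
    have : Pen n α x = Pen n α (yv n y) := by
      unfold Pen
      apply Finset.sum_congr rfl
      intro t ht
      simp at ht
      rw [hq0 (t+1) (by omega), hq0 t (by omega)]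
    linarith

lemma cont_est (hα : ∀ t, 0 ≤ α t) {γ γ' : ℝ} (hγ : 0 ≤ γ) (hγ' : 0 ≤ γ')
    {x v : ℕ → ℝ} (h1 : IsMin n y α γ x) (h2 : IsMin n y α γ' v) :
    ∑ u ∈ range (n+1), (v u - x u)^2 ≤ 8 * |γ - γ'| * Pen n α (yv n y) := by
  have hmid := midpoint_obj (y := y) hα hγ x v
  have ha := h1 (fun u => (x u + v u)/2)
  have hS : (∑ u ∈ range (n+1), (v u - x u)^2)/4 ≤ Obj n y α γ v - Obj n y α γ x := by
    linarith
  have hsw : Obj n y α γ v = Obj n y α γ' v + (γ - γ') * Pen n α v := by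
    unfold Obj; ring
  have hsw2 : Obj n y α γ' x = Obj n y α γ x + (γ' - γ) * Pen n α x := by
    unfold Obj; ring
  have hb := h2 x
  have hbd : Obj n y α γ v - Obj n y α γ x ≤ (γ - γ') * (Pen n α v - Pen n α x) := by
    rw [hsw]
    have : Obj n y α γ' v ≤ Obj n y α γ' x := hb
    rw [hsw2] at this
    linarith
  have hpx := pen_min_le hα hγ h1
  have hpv := pen_min_le hα hγ' h2
  have hpx0 := pen_nonneg hα x
  have hpv0 := pen_nonneg hα v
  have hPY0 : 0 ≤ Pen n α (yv n y) := pen_nonneg hα (yv n y)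
  have habs : (γ - γ') * (Pen n α v - Pen n α x) ≤ |γ - γ'| * (2 * Pen n α (yv n y)) := by
    calc (γ - γ') * (Pen n α v - Pen n α x) ≤ |(γ - γ') * (Pen n α v - Pen n α x)| := le_abs_self _
      _ = |γ - γ'| * |Pen n α v - Pen n α x| := abs_mul _ _
      _ ≤ |γ - γ'| * (2 * Pen n α (yv n y)) := by
          apply mul_le_mul_of_nonneg_left _ (abs_nonneg _)
          rw [abs_le]; constructor <;> linarith
  linarith

open scoped Classical in
/-- Active boundaries of a vector `z` (jump points), plus virtual boundaries. -/
def Act (n : ℕ) (z : ℕ → ℝ) (m : ℕ) : Prop :=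
  m = 0 ∨ m = n+1 ∨ (1 ≤ m ∧ m ≤ n ∧ z m ≠ z (m-1)) ∨ n+2 ≤ m

variable {z : ℕ → ℝ}

lemma act_zero (z : ℕ → ℝ) : Act n z 0 := Or.inl rfl

lemma act_top (z : ℕ → ℝ) : Act n z (n+1) := Or.inr (Or.inl rfl)

lemma act_exists (z : ℕ → ℝ) (u : ℕ) : ∃ m, u < m ∧ Act n z m := by
  refine ⟨max (n+1) (u+1), ?_, ?_⟩
  · have := le_max_right (n+1) (u+1); omega
  · rcases le_or_gt (u+1) (n+1) with h | h
    · rw [max_eq_left h]; exact act_top z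
    · rw [max_eq_right (le_of_lt h)]; right; right; right; omega

open scoped Classical in
noncomputable def jA (n : ℕ) (z : ℕ → ℝ) (u : ℕ) : ℕ := Nat.find (act_exists (n := n) z u)

open scoped Classical in
noncomputable def iA (n : ℕ) (z : ℕ → ℝ) (u : ℕ) : ℕ := Nat.findGreatest (Act n z) u

open scoped Classical

lemma iA_le (u : ℕ) : iA n z u ≤ u := Nat.findGreatest_le u

lemma iA_act (u : ℕ) : Act n z (iA n z u) :=
  Nat.findGreatest_spec (Nat.zero_le u) (act_zero z)

lemma iA_max {u m : ℕ} (h1 : iA n z u < m) (h2 : m ≤ u) : ¬ Act n z m :=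
  Nat.findGreatest_is_greatest h1 h2

lemma jA_gt (u : ℕ) : u < jA n z u := (Nat.find_spec (act_exists (n := n) z u)).1

lemma jA_act (u : ℕ) : Act n z (jA n z u) := (Nat.find_spec (act_exists (n := n) z u)).2

lemma jA_min {u m : ℕ} (h1 : u < m) (h2 : m < jA n z u) : ¬ Act n z m := by
  intro hact
  exact Nat.find_min (act_exists (n := n) z u) h2 ⟨h1, hact⟩

lemma jA_le {u : ℕ} (h : u ≤ n) : jA n z u ≤ n+1 :=
  Nat.find_min' (act_exists (n := n) z u) ⟨by omega, act_top z⟩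

lemma iA_eq {u i : ℕ} (hi : Act n z i) (hiu : i ≤ u)
    (hnone : ∀ v, i < v → v ≤ u → ¬ Act n z v) : iA n z u = i := by
  rw [iA, Nat.findGreatest_eq_iff]
  exact ⟨hiu, fun _ => hi, fun m h1 h2 => hnone m h1 h2⟩

lemma jA_eq {u j : ℕ} (hj : Act n z j) (huj : u < j)
    (hnone : ∀ v, u < v → v < j → ¬ Act n z v) : jA n z u = j := by
  rw [jA, Nat.find_eq_iff]
  refine ⟨⟨huj, hj⟩, fun m hm hc => hnone m hc.1 hm hc.2⟩

lemma block_mem {u w : ℕ} (h1 : iA n z u ≤ w) (h2 : w < jA n z u) :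
    iA n z w = iA n z u ∧ jA n z w = jA n z u := by
  constructor
  · apply iA_eq (iA_act u) h1
    intro v hv1 hv2
    rcases le_or_gt v u with h | h
    · exact iA_max (lt_of_le_of_lt (le_refl _) hv1) h
    · exact jA_min h (lt_of_le_of_lt hv2 h2)
  · apply jA_eq (jA_act u) h2
    intro v hv1 hv2
    rcases le_or_gt v u with h | h
    · exact iA_max (lt_of_le_of_lt h1 hv1) h
    · exact jA_min h hv2

noncomputable def sg (n : ℕ) (y : Fin (n + 1) → ℝ) (α : Fin n → ℝ) (z : ℕ → ℝ) (γ0 : ℝ) (m : ℕ) : ℝ :=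
  if Wf n y z m = γ0 * av n α m then 1 else -1

noncomputable def sol (n : ℕ) (y : Fin (n + 1) → ℝ) (α : Fin n → ℝ) (z : ℕ → ℝ) (γ0 γ : ℝ) (u : ℕ) : ℝ :=
  ((∑ v ∈ Finset.Ico (iA n z u) (jA n z u), yv n y v)
    + sg n y α z γ0 (jA n z u) * γ * av n α (jA n z u)
    - sg n y α z γ0 (iA n z u) * γ * av n α (iA n z u)) / ((jA n z u : ℝ) - (iA n z u : ℝ))

noncomputable def solA (n : ℕ) (y : Fin (n + 1) → ℝ) (α : Fin n → ℝ) (z : ℕ → ℝ) (γ0 : ℝ) (u : ℕ) : ℝ :=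
  (∑ v ∈ Finset.Ico (iA n z u) (jA n z u), yv n y v) / ((jA n z u : ℝ) - (iA n z u : ℝ))

noncomputable def solB (n : ℕ) (y : Fin (n + 1) → ℝ) (α : Fin n → ℝ) (z : ℕ → ℝ) (γ0 : ℝ) (u : ℕ) : ℝ :=
  (sg n y α z γ0 (jA n z u) * av n α (jA n z u)
    - sg n y α z γ0 (iA n z u) * av n α (iA n z u)) / ((jA n z u : ℝ) - (iA n z u : ℝ))

lemma sol_affine (z : ℕ → ℝ) (γ0 γ : ℝ) (u : ℕ) :
    sol n y α z γ0 γ u = solA n y α z γ0 u + γ * solB n y α z γ0 u := by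
  unfold sol solA solB
  ring

lemma av_zero : av n α 0 = 0 := by unfold av; rw [dif_neg]; omega

lemma sg_abs (z : ℕ → ℝ) (γ0 : ℝ) (m : ℕ) : sg n y α z γ0 m = 1 ∨ sg n y α z γ0 m = -1 := by
  unfold sg; split <;> simp

/-- Partial sums of the candidate at active boundaries. -/
lemma wf_sol_act (z : ℕ → ℝ) (γ0 γ : ℝ) :
    ∀ m, m ≤ n+1 → Act n z m →
      Wf n y (sol n y α z γ0 γ) m = sg n y α z γ0 m * γ * av n α m := by
  intro m
  induction m using Nat.strong_induction_on with
  | _ m IH =>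
    intro hm hact
    rcases Nat.eq_zero_or_pos m with h0 | hpos
    · subst h0
      unfold Wf
      simp [av_zero (α := α)]
    · set i := iA n z (m-1) with hi
      have hile : i ≤ m - 1 := iA_le _
      have hiact : Act n z i := iA_act _
      have hilt : i < m := by omega
      have hblk : ∀ w, i ≤ w → w < m → iA n z w = i ∧ jA n z w = m := by
        intro w hw1 hw2
        have hwm1 : w ≤ m - 1 := by omega
        have hiw : iA n z w = i := by
          apply iA_eq hiact hw1
          intro v hv1 hv2
          exact iA_max (u := m-1) (by omega) (by omega)
        have hjw : jA n z w = m := by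
          apply jA_eq hact hw2
          intro v hv1 hv2
          exact iA_max (u := m-1) (by omega) (by omega)
        exact ⟨hiw, hjw⟩
      have hsum : Wf n y (sol n y α z γ0 γ) m
          = Wf n y (sol n y α z γ0 γ) i
            + ∑ w ∈ Finset.Ico i m, (sol n y α z γ0 γ w - yv n y w) := by
        unfold Wf
        rw [Finset.sum_Ico_eq_sub _ (le_of_lt hilt)]
        ring
      have hval : ∀ w ∈ Finset.Ico i m, sol n y α z γ0 γ w
          = ((∑ v ∈ Finset.Ico i m, yv n y v)
            + sg n y α z γ0 m * γ * av n α m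
            - sg n y α z γ0 i * γ * av n α i) / ((m : ℝ) - (i : ℝ)) := by
        intro w hw
        simp only [Finset.mem_Ico] at hw
        obtain ⟨hiw, hjw⟩ := hblk w hw.1 hw.2
        unfold sol
        rw [hiw, hjw]
      have hconst : ∑ w ∈ Finset.Ico i m, (sol n y α z γ0 γ w - yv n y w)
          = sg n y α z γ0 m * γ * av n α m - sg n y α z γ0 i * γ * av n α i := by
        rw [Finset.sum_sub_distrib]
        rw [Finset.sum_congr rfl hval]
        rw [Finset.sum_const, Nat.card_Ico, nsmul_eq_mul]
        have hcast : ((m - i : ℕ) : ℝ) = (m : ℝ) - (i : ℝ) := by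
          push_cast [le_of_lt hilt]; ring
        rw [hcast]
        have hne : (m : ℝ) - (i : ℝ) ≠ 0 := by
          have : (i:ℝ) < (m:ℝ) := by exact_mod_cast hilt
          linarith
        field_simp
        ring
      have hIH : Wf n y (sol n y α z γ0 γ) i = sg n y α z γ0 i * γ * av n α i :=
        IH i hilt (by omega) hiact
      rw [hsum, hIH, hconst]
      ring

lemma wf_sol_top (z : ℕ → ℝ) (γ0 γ : ℝ) : Wf n y (sol n y α z γ0 γ) (n+1) = 0 := by
  rw [wf_sol_act (z := z) γ0 γ (n+1) (le_refl _) (act_top z)]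
  rw [av_zero_of_gt (by omega)]
  ring

/-- Master affine formula for partial sums inside a block. -/
noncomputable def gW (n : ℕ) (y : Fin (n + 1) → ℝ) (α : Fin n → ℝ) (i j : ℕ) (si sj : ℝ) (m : ℕ) (γ : ℝ) : ℝ :=
  si*γ*av n α i
    + ((m : ℝ) - i) * (((∑ v ∈ Finset.Ico i j, yv n y v) + sj*γ*av n α j - si*γ*av n α i)
        / ((j : ℝ) - i))
    - ∑ v ∈ Finset.Ico i m, yv n y v

lemma wf_sol_inact (z : ℕ → ℝ) (γ0 γ : ℝ) {m : ℕ} (h1 : 1 ≤ m) (h2 : m ≤ n)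
    (hin : ¬ Act n z m) :
    Wf n y (sol n y α z γ0 γ) m
      = gW n y α (iA n z m) (jA n z m) (sg n y α z γ0 (iA n z m)) (sg n y α z γ0 (jA n z m)) m γ := by
  set i := iA n z m with hi
  set j := jA n z m with hj
  have hile : i ≤ m := iA_le _
  have hilt : i < m := by
    rcases lt_or_eq_of_le hile with h | h
    · exact h
    · exfalso; rw [h] at hi; exact hin (hi ▸ iA_act m)
  have hjgt : m < j := jA_gt _
  have hblk : ∀ w, i ≤ w → w < m → iA n z w = i ∧ jA n z w = j := by
    intro w hw1 hw2
    exact block_mem hw1 (by omega)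
  have hsum : Wf n y (sol n y α z γ0 γ) m
      = Wf n y (sol n y α z γ0 γ) i
        + ∑ w ∈ Finset.Ico i m, (sol n y α z γ0 γ w - yv n y w) := by
    unfold Wf
    rw [Finset.sum_Ico_eq_sub _ (le_of_lt hilt)]
    ring
  have hval : ∀ w ∈ Finset.Ico i m, sol n y α z γ0 γ w
      = ((∑ v ∈ Finset.Ico i j, yv n y v)
        + sg n y α z γ0 j * γ * av n α j
        - sg n y α z γ0 i * γ * av n α i) / ((j : ℝ) - (i : ℝ)) := by
    intro w hw
    simp only [Finset.mem_Ico] at hw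
    obtain ⟨hiw, hjw⟩ := hblk w hw.1 hw.2
    unfold sol
    rw [hiw, hjw]
  have hconst : ∑ w ∈ Finset.Ico i m, (sol n y α z γ0 γ w - yv n y w)
      = ((m:ℝ) - i) * (((∑ v ∈ Finset.Ico i j, yv n y v)
          + sg n y α z γ0 j * γ * av n α j
          - sg n y α z γ0 i * γ * av n α i) / ((j : ℝ) - (i : ℝ)))
        - ∑ v ∈ Finset.Ico i m, yv n y v := by
    rw [Finset.sum_sub_distrib]
    rw [Finset.sum_congr rfl hval]
    rw [Finset.sum_const, Nat.card_Ico, nsmul_eq_mul]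
    have hcast : ((m - i : ℕ) : ℝ) = (m : ℝ) - (i : ℝ) := by
      push_cast [le_of_lt hilt]; ring
    rw [hcast]
  have hWi : Wf n y (sol n y α z γ0 γ) i = sg n y α z γ0 i * γ * av n α i :=
    wf_sol_act z γ0 γ i (by omega) (iA_act m)
  rw [hsum, hWi, hconst]
  unfold gW
  ring

lemma sol_jump_zero (z : ℕ → ℝ) (γ0 γ : ℝ) {m : ℕ} (h1 : 1 ≤ m) (hin : ¬ Act n z m) :
    sol n y α z γ0 γ m = sol n y α z γ0 γ (m-1) := by
  have hile : iA n z m ≤ m := iA_le _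
  have hilt : iA n z m < m := by
    rcases lt_or_eq_of_le hile with h | h
    · exact h
    · exfalso; exact hin (h ▸ iA_act m)
  obtain ⟨h1', h2'⟩ := block_mem (n := n) (z := z) (u := m) (w := m-1) (by omega)
    (by have := jA_gt (n := n) (z := z) m; omega)
  unfold sol
  rw [h1', h2']

lemma wf_zero (z : ℕ → ℝ) : Wf n y z 0 = 0 := by unfold Wf; simp

lemma sg_act {γ0 : ℝ} {z : ℕ → ℝ} (hk : KKT n y α γ0 z) {m : ℕ} (hm : m ≤ n+1)
    (hact : Act n z m) : Wf n y z m = sg n y α z γ0 m * γ0 * av n α m := by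
  rcases hact with h0 | htop | ⟨h1, h2, hne⟩ | hbig
  · subst h0
    rw [wf_zero, av_zero (α := α)]
    ring
  · subst htop
    rw [hk.1, av_zero_of_gt (by omega)]
    ring
  · obtain ⟨htube, hpos, hneg⟩ := hk.2 m h1 h2
    rcases lt_trichotomy (z (m-1)) (z m) with h | h | h
    · have hW := hpos h
      unfold sg
      rw [if_pos hW, hW]
      ring
    · exact absurd h.symm hne
    · have hW := hneg h
      by_cases hz : γ0 * av n α m = 0
      · have hW0 : Wf n y z m = 0 := by rw [hW, hz]; ring
        unfold sg
        rw [if_pos (by rw [hW0, hz])]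
        rw [hW0]; linarith
      · unfold sg
        rw [if_neg (by rw [hW]; intro hcc; apply hz; linarith), hW]
        ring
  · omega

lemma z_const {z : ℕ → ℝ} {u : ℕ} (hu : u ≤ n) :
    ∀ w, iA n z u ≤ w → w < jA n z u → z w = z (iA n z u) := by
  intro w
  induction w using Nat.strong_induction_on with
  | _ w IH =>
    intro hw1 hw2
    rcases lt_or_eq_of_le hw1 with hlt | heq
    · have hw0 : 1 ≤ w := by omega
      have hna : ¬ Act n z w := by
        rcases le_or_gt w u with h | h
        · exact iA_max hlt h
        · exact jA_min h hw2
      have hwn : w ≤ n := by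
        have := jA_le (z := z) hu
        omega
      have hzz : z w = z (w-1) := by
        by_contra hzz
        exact hna (Or.inr (Or.inr (Or.inl ⟨hw0, hwn, hzz⟩)))
      rw [hzz]
      exact IH (w-1) (by omega) (by omega) (by omega)
    · rw [← heq]

lemma sol_at_base (hα : ∀ t, 0 ≤ α t) {γ0 : ℝ} {z : ℕ → ℝ} (hk : KKT n y α γ0 z)
    {u : ℕ} (hu : u ≤ n) : sol n y α z γ0 γ0 u = z u := by
  set i := iA n z u with hi
  set j := jA n z u with hj
  have hiu : i ≤ u := iA_le _
  have hju : u < j := jA_gt _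
  have hjn : j ≤ n+1 := jA_le hu
  have hzu : z u = z i := z_const hu u hiu hju
  have hsum : ∑ w ∈ Finset.Ico i j, (z w - yv n y w) = Wf n y z j - Wf n y z i := by
    unfold Wf
    rw [Finset.sum_Ico_eq_sub _ (by omega)]
  have hWj : Wf n y z j = sg n y α z γ0 j * γ0 * av n α j := sg_act hk hjn (jA_act u)
  have hWi : Wf n y z i = sg n y α z γ0 i * γ0 * av n α i := sg_act hk (by omega) (iA_act u)
  have hzw : ∀ w ∈ Finset.Ico i j, z w = z i := by
    intro w hw
    simp only [Finset.mem_Ico] at hw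
    exact z_const hu w hw.1 hw.2
  have hsum2 : ∑ w ∈ Finset.Ico i j, (z w - yv n y w)
      = ((j : ℝ) - i) * z i - ∑ w ∈ Finset.Ico i j, yv n y w := by
    rw [Finset.sum_sub_distrib, Finset.sum_congr rfl hzw, Finset.sum_const, Nat.card_Ico,
      nsmul_eq_mul]
    have hcast : ((j - i : ℕ) : ℝ) = (j : ℝ) - (i : ℝ) := by
      push_cast [le_of_lt (lt_of_le_of_lt hiu hju)]; ring
    rw [hcast]
  have hne : (j : ℝ) - i ≠ 0 := by
    have : (i:ℝ) < (j:ℝ) := by exact_mod_cast lt_of_le_of_lt hiu hju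
    linarith
  unfold sol
  rw [← hi, ← hj, hzu]
  rw [hsum2, hWj, hWi] at hsum
  field_simp
  linarith

noncomputable def gcomp (n : ℕ) (y : Fin (n + 1) → ℝ) (α : Fin n → ℝ)
    (i j : ℕ) (si sj : ℝ) (m : ℕ) (e : Bool) (γ : ℝ) : ℝ :=
  (if e then 1 else -1) * gW n y α i j si sj m γ - γ * av n α m

def gidx (i j : ℕ) : Finset (ℕ × Bool) :=
  Finset.Ico (i+1) j ×ˢ ({true, false} : Finset Bool)

lemma gidx_nonempty {i j : ℕ} (h : i + 1 < j) : (gidx i j).Nonempty := by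
  refine ⟨(i+1, true), ?_⟩
  simp [gidx]
  omega

noncomputable def gmax (n : ℕ) (y : Fin (n + 1) → ℝ) (α : Fin n → ℝ)
    (i j : ℕ) (si sj : ℝ) (γ : ℝ) : ℝ :=
  if h : (gidx i j).Nonempty then
    (gidx i j).sup' h (fun p => gcomp n y α i j si sj p.1 p.2 γ)
  else 0

lemma le_gmax {i j : ℕ} {p : ℕ × Bool} (hp : p ∈ gidx i j) (si sj : ℝ) (γ : ℝ) :
    gcomp n y α i j si sj p.1 p.2 γ ≤ gmax n y α i j si sj γ := by
  unfold gmax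
  rw [dif_pos ⟨p, hp⟩]
  exact Finset.le_sup' (fun q => gcomp n y α i j si sj q.1 q.2 γ) hp

lemma gmax_le_iff {i j : ℕ} (h : (gidx i j).Nonempty) (si sj : ℝ) (γ c : ℝ) :
    gmax n y α i j si sj γ ≤ c ↔ ∀ p ∈ gidx i j, gcomp n y α i j si sj p.1 p.2 γ ≤ c := by
  unfold gmax
  rw [dif_pos h]
  constructor
  · intro hle p hp
    exact le_trans (Finset.le_sup' (fun q => gcomp n y α i j si sj q.1 q.2 γ) hp) hle
  · intro hall
    exact Finset.sup'_le h _ (fun p hp => hall p hp)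

lemma gcomp_three (i j : ℕ) (si sj : ℝ) (m : ℕ) (e : Bool) (a b c : ℝ) :
    gcomp n y α i j si sj m e b * (c - a)
      = gcomp n y α i j si sj m e a * (c - b) + gcomp n y α i j si sj m e c * (b - a) := by
  cases e <;> simp only [gcomp, gW, if_true, if_false] <;> ring

lemma gmax_three (i j : ℕ) (si sj : ℝ) {a b c : ℝ} (hab : a < b) (hbc : b < c) :
    gmax n y α i j si sj b * (c - a)
      ≤ gmax n y α i j si sj a * (c - b) + gmax n y α i j si sj c * (b - a) := by
  by_cases h : (gidx i j).Nonempty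
  · obtain ⟨p, hp, hpb⟩ := Finset.exists_mem_eq_sup' h
      (fun p => gcomp n y α i j si sj p.1 p.2 b)
    have hgb : gmax n y α i j si sj b = gcomp n y α i j si sj p.1 p.2 b := by
      unfold gmax; rw [dif_pos h]; exact hpb
    rw [hgb]
    have h3 := gcomp_three (n := n) (y := y) (α := α) i j si sj p.1 p.2 a b c
    have ha := le_gmax (n := n) (y := y) (α := α) hp si sj a
    have hc := le_gmax (n := n) (y := y) (α := α) hp si sj c
    have hca : 0 ≤ c - b := by linarith
    have hba : 0 ≤ b - a := by linarith
    calc gcomp n y α i j si sj p.1 p.2 b * (c - a)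
        = gcomp n y α i j si sj p.1 p.2 a * (c - b)
          + gcomp n y α i j si sj p.1 p.2 c * (b - a) := h3
      _ ≤ gmax n y α i j si sj a * (c - b) + gmax n y α i j si sj c * (b - a) := by
          apply add_le_add
          · exact mul_le_mul_of_nonneg_right ha hca
          · exact mul_le_mul_of_nonneg_right hc hba
  · unfold gmax
    simp only [dif_neg h]
    simp

/-- Points where `g ≤ 0` holds but not on a neighbourhood. -/
def Bad (g : ℝ → ℝ) : Set ℝ :=
  {γ | g γ ≤ 0 ∧ ¬ ∃ ε > 0, ∀ δ, |δ - γ| < ε → g δ ≤ 0}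

lemma not_bad_ball {g : ℝ → ℝ} {γ : ℝ} (hg : g γ ≤ 0) (hnb : γ ∉ Bad g) :
    ∃ ε > 0, ∀ δ, |δ - γ| < ε → g δ ≤ 0 := by
  by_contra h
  exact hnb ⟨hg, h⟩

lemma bad_two {g : ℝ → ℝ}
    (hconv : ∀ a b c : ℝ, a < b → b < c → g b * (c - a) ≤ g a * (c - b) + g c * (b - a)) :
    ∃ u v, Bad g ⊆ {u, v} := by
  have h3 : ∀ b1 b2 b3 : ℝ, b1 ∈ Bad g → b2 ∈ Bad g → b3 ∈ Bad g →
      b1 < b2 → b2 < b3 → False := by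
    intro b1 b2 b3 hb1 hb2 hb3 h12 h23
    obtain ⟨hg1, _⟩ := hb1
    obtain ⟨hg2, hn2⟩ := hb2
    obtain ⟨hg3, _⟩ := hb3
    push_neg at hn2
    obtain ⟨δ, hδd, hδpos⟩ := hn2 (min (b2 - b1) (b3 - b2)) (by
      apply lt_min <;> linarith)
    have hδ1 : b1 < δ := by
      have h1 := abs_lt.mp hδd
      have := min_le_left (b2 - b1) (b3 - b2)
      linarith [h1.1]
    have hδ3 : δ < b3 := by
      have h1 := abs_lt.mp hδd
      have := min_le_right (b2 - b1) (b3 - b2)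
      linarith [h1.2]
    rcases lt_trichotomy δ b2 with h | h | h
    · have := hconv b1 δ b2 hδ1 h
      nlinarith
    · rw [h] at hδpos; linarith
    · have := hconv b2 δ b3 h hδ3
      nlinarith
  have h3' : ∀ a b c : ℝ, a ∈ Bad g → b ∈ Bad g → c ∈ Bad g →
      a ≠ b → a ≠ c → b ≠ c → False := by
    intro a b c ha hb hc hab hac hbc
    rcases lt_trichotomy a b with h1 | h1 | h1
    · rcases lt_trichotomy b c with h2 | h2 | h2
      · exact h3 a b c ha hb hc h1 h2
      · exact hbc h2
      · rcases lt_trichotomy a c with h4 | h4 | h4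
        · exact h3 a c b ha hc hb h4 h2
        · exact hac h4
        · exact h3 c a b hc ha hb h4 h1
    · exact hab h1
    · rcases lt_trichotomy a c with h2 | h2 | h2
      · exact h3 b a c hb ha hc h1 h2
      · exact hac h2
      · rcases lt_trichotomy b c with h4 | h4 | h4
        · exact h3 b c a hb hc ha h4 h2
        · exact hbc h4
        · exact h3 c b a hc hb ha h4 h1
  by_cases hex : ∃ u v, u ∈ Bad g ∧ v ∈ Bad g ∧ u ≠ v
  · obtain ⟨u, v, hu, hv, huv⟩ := hex
    refine ⟨u, v, ?_⟩
    intro w hw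
    by_contra hws
    simp only [Set.mem_insert_iff, Set.mem_singleton_iff] at hws
    push_neg at hws
    exact h3' u v w hu hv hw huv (Ne.symm hws.1) (Ne.symm hws.2)
  · push_neg at hex
    by_cases hx : ∃ u, u ∈ Bad g
    · obtain ⟨u, hu⟩ := hx
      refine ⟨u, u, ?_⟩
      intro w hw
      have := hex u w hu hw
      simp at this ⊢
      tauto
    · push_neg at hx
      exact ⟨0, 0, fun w hw => absurd hw (hx w)⟩

lemma wf_congr {x v : ℕ → ℝ} {m : ℕ} (h : ∀ u, u < m → x u = v u) :
    Wf n y x m = Wf n y v m := by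
  unfold Wf
  apply Finset.sum_congr rfl
  intro u hu
  rw [h u (Finset.mem_range.mp hu)]

lemma affine_sign {A B γ0 : ℝ} (h : A + γ0*B ≠ 0) :
    ∃ ε > 0, ∀ γ, |γ - γ0| < ε →
      ((0 < A + γ0*B → 0 < A + γ*B) ∧ (A + γ0*B < 0 → A + γ*B < 0)) := by
  refine ⟨|A + γ0*B| / (|B| + 1), by positivity, ?_⟩
  intro γ hγ
  have hdiff : |(A + γ*B) - (A + γ0*B)| ≤ |γ - γ0| * (|B| + 1) := by
    have h1 : (A + γ*B) - (A + γ0*B) = (γ - γ0) * B := by ring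
    rw [h1, abs_mul]
    have := abs_nonneg (γ - γ0)
    nlinarith [abs_nonneg B]
  have hlt : |(A + γ*B) - (A + γ0*B)| < |A + γ0*B| := by
    have hB1 : (0:ℝ) < |B| + 1 := by positivity
    calc |(A + γ*B) - (A + γ0*B)| ≤ |γ - γ0| * (|B| + 1) := hdiff
      _ < (|A + γ0*B| / (|B| + 1)) * (|B| + 1) := mul_lt_mul_of_pos_right hγ hB1
      _ = |A + γ0*B| := by field_simp
  constructor
  · intro hp
    have habs := abs_lt.mp hlt
    rw [abs_of_pos hp] at habs
    linarith [habs.1]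
  · intro hn
    have habs := abs_lt.mp hlt
    rw [abs_of_neg hn] at habs
    linarith [habs.2]

lemma local_kkt (hα : ∀ t, 0 ≤ α t) {γ0 : ℝ} (hγ0 : 0 < γ0) {z : ℕ → ℝ}
    (hmin : IsMin n y α γ0 z)
    (hbad : ∀ i j : ℕ, ∀ si sj : ℝ, i + 1 < j → j ≤ n + 1 →
      (si = 1 ∨ si = -1) → (sj = 1 ∨ sj = -1) → γ0 ∉ Bad (gmax n y α i j si sj)) :
    ∃ ε > 0, ∀ γ, |γ - γ0| < ε → KKT n y α γ (sol n y α z γ0 γ) := by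
  have hk : KKT n y α γ0 z := kkt_of_isMin hα (le_of_lt hγ0) hmin
  -- per-index neighbourhoods
  have hall : ∀ m, 1 ≤ m → m ≤ n → ∃ ε > 0, ∀ γ, |γ - γ0| < ε → 0 ≤ γ →
      (|Wf n y (sol n y α z γ0 γ) m| ≤ γ * av n α m ∧
       (sol n y α z γ0 γ (m-1) < sol n y α z γ0 γ m →
         Wf n y (sol n y α z γ0 γ) m = γ * av n α m) ∧
       (sol n y α z γ0 γ m < sol n y α z γ0 γ (m-1) →
         Wf n y (sol n y α z γ0 γ) m = -(γ * av n α m))) := by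
    intro m h1 h2
    by_cases hact : Act n z m
    · -- active boundary
      have hWs : ∀ γ, Wf n y (sol n y α z γ0 γ) m = sg n y α z γ0 m * γ * av n α m :=
        fun γ => wf_sol_act z γ0 γ m (by omega) hact
      have hjump : z m ≠ z (m-1) := by
        rcases hact with h | h | ⟨_, _, h⟩ | h
        · omega
        · omega
        · exact h
        · omega
      -- the jump of sol is affine in γ and non-zero at γ0
      set A := (solA n y α z γ0 m - solA n y α z γ0 (m-1)) with hAd
      set B := (solB n y α z γ0 m - solB n y α z γ0 (m-1)) with hBd
      have hsolj : ∀ γ, sol n y α z γ0 γ m - sol n y α z γ0 γ (m-1) = A + γ * B := by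
        intro γ
        rw [sol_affine, sol_affine, hAd, hBd]
        ring
      have hbase : sol n y α z γ0 γ0 m - sol n y α z γ0 γ0 (m-1) = z m - z (m-1) := by
        rw [sol_at_base hα hk (by omega), sol_at_base hα hk (by omega)]
      have hABne : A + γ0 * B ≠ 0 := by
        rw [← hsolj γ0, hbase]
        exact fun hc => hjump (sub_eq_zero.mp hc)
      obtain ⟨ε, hε0, hεs⟩ := affine_sign hABne
      refine ⟨ε, hε0, ?_⟩
      intro γ hγb hγ0'
      have hWa : |Wf n y (sol n y α z γ0 γ) m| ≤ γ * av n α m := by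
        rw [hWs γ, abs_mul, abs_mul]
        rcases sg_abs (n := n) (y := y) (α := α) z γ0 m with h | h <;>
          rw [h] <;> simp [abs_of_nonneg hγ0', abs_of_nonneg (av_nonneg hα m)]
      refine ⟨hWa, ?_, ?_⟩
      · intro hlt
        have hγlt : 0 < A + γ * B := by rw [← hsolj γ]; linarith
        -- the base jump must be positive
        have hb : 0 < A + γ0 * B := by
          by_contra hb
          push_neg at hb
          rcases lt_or_eq_of_le hb with hb' | hb'
          · have := (hεs γ hγb).2 hb'
            linarith
          · exact hABne hb'
        have hzlt : z (m-1) < z m := by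
          have h5 := hsolj γ0
          rw [hbase] at h5
          linarith
        have hsg : sg n y α z γ0 m = 1 := by
          unfold sg
          rw [if_pos ((hk.2 m h1 h2).2.1 hzlt)]
        rw [hWs γ, hsg]
        ring
      · intro hlt
        have hγlt : A + γ * B < 0 := by rw [← hsolj γ]; linarith
        have hb : A + γ0 * B < 0 := by
          by_contra hb
          push_neg at hb
          rcases lt_or_eq_of_le hb with hb' | hb'
          · have := (hεs γ hγb).1 hb'
            linarith
          · exact hABne hb'.symm
        have hzlt : z m < z (m-1) := by
          have h5 := hsolj γ0
          rw [hbase] at h5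
          linarith
        have hWz : Wf n y z m = -(γ0 * av n α m) := (hk.2 m h1 h2).2.2 hzlt
        by_cases hz : γ0 * av n α m = 0
        · have hav : av n α m = 0 := by
            rcases mul_eq_zero.mp hz with h | h
            · exact absurd h (ne_of_gt hγ0)
            · exact h
          rw [hWs γ, hav]
          ring
        · have hsg : sg n y α z γ0 m = -1 := by
            unfold sg
            rw [if_neg]
            rw [hWz]
            intro hc
            exact hz (by linarith)
          rw [hWs γ, hsg]
          ring
    · -- inactive boundary
      set i := iA n z m with hi
      set j := jA n z m with hj
      have hile : i ≤ m := iA_le _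
      have hilt : i < m := by
        rcases lt_or_eq_of_le hile with h | h
        · exact h
        · exfalso; exact hact (h ▸ iA_act m)
      have hjgt : m < j := jA_gt _
      have hjle : j ≤ n + 1 := jA_le h2
      set si := sg n y α z γ0 i with hsi
      set sj := sg n y α z γ0 j with hsj
      have hsol0 : ∀ u, u < n + 1 → sol n y α z γ0 γ0 u = z u := by
        intro u hu
        exact sol_at_base hα hk (by omega)
      -- inner indices are inactive
      have hinner : ∀ m', i < m' → m' < j → ¬ Act n z m' := by
        intro m' hm1 hm2
        rcases le_or_gt m' m with h | h
        · exact iA_max (u := m) hm1 h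
        · exact jA_min (u := m) h hm2
      have hblk : ∀ m', i < m' → m' < j → iA n z m' = i ∧ jA n z m' = j := by
        intro m' hm1 hm2
        exact block_mem (le_of_lt hm1) hm2
      have hgw : ∀ m', i < m' → m' < j → ∀ γ,
          Wf n y (sol n y α z γ0 γ) m' = gW n y α i j si sj m' γ := by
        intro m' hm1 hm2 γ
        have h1' : 1 ≤ m' := by omega
        have h2' : m' ≤ n := by omega
        have := wf_sol_inact (y := y) (α := α) z γ0 γ h1' h2' (hinner m' hm1 hm2)
        rw [(hblk m' hm1 hm2).1, (hblk m' hm1 hm2).2] at this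
        exact this
      -- gmax at γ0 is ≤ 0
      have hg0 : gmax n y α i j si sj γ0 ≤ 0 := by
        rw [gmax_le_iff (gidx_nonempty (by omega)) si sj γ0 0]
        intro p hp
        simp only [gidx, Finset.mem_product, Finset.mem_Ico] at hp
        have hm1 : i < p.1 := by omega
        have hm2 : p.1 < j := by omega
        have h1' : 1 ≤ p.1 := by omega
        have h2' : p.1 ≤ n := by omega
        have hWeq : gW n y α i j si sj p.1 γ0 = Wf n y z p.1 := by
          rw [← hgw p.1 hm1 hm2 γ0]
          exact wf_congr (fun u hu => hsol0 u (by omega))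
        have htube := (hk.2 p.1 h1' h2').1
        have habs := abs_le.mp htube
        unfold gcomp
        rw [hWeq]
        cases p.2 <;> simp <;> linarith [habs.1, habs.2]
      have hnb := hbad i j si sj (by omega) hjle
        (sg_abs (n := n) (y := y) (α := α) z γ0 i) (sg_abs (n := n) (y := y) (α := α) z γ0 j)
      obtain ⟨ε, hε0, hεb⟩ := not_bad_ball hg0 hnb
      refine ⟨ε, hε0, ?_⟩
      intro γ hγb _
      have hgm : gmax n y α i j si sj γ ≤ 0 := hεb γ hγb
      have htube : |Wf n y (sol n y α z γ0 γ) m| ≤ γ * av n α m := by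
        have hmem : ((m, true) : ℕ × Bool) ∈ gidx i j := by
          simp [gidx]; omega
        have hmem' : ((m, false) : ℕ × Bool) ∈ gidx i j := by
          simp [gidx]; omega
        have hp := le_trans (le_gmax (n := n) (y := y) (α := α) hmem si sj γ) hgm
        have hp' := le_trans (le_gmax (n := n) (y := y) (α := α) hmem' si sj γ) hgm
        unfold gcomp at hp hp'
        norm_num at hp hp'
        rw [← hgw m hilt hjgt γ] at hp hp'
        rw [abs_le]
        constructor <;> [linarith; linarith]
      refine ⟨htube, ?_, ?_⟩
      · intro hlt
        exfalso
        rw [sol_jump_zero z γ0 γ h1 hact] at hlt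
        exact lt_irrefl _ hlt
      · intro hlt
        exfalso
        rw [sol_jump_zero z γ0 γ h1 hact] at hlt
        exact lt_irrefl _ hlt
  -- combine the finitely many neighbourhoods
  classical
  choose! εf hεf0 hεf using hall
  set εtot := min γ0 ((Finset.range (n+1)).inf' Finset.nonempty_range_add_one
    (fun m => if h : 1 ≤ m ∧ m ≤ n then εf m else 1)) with hεtot
  have hεpos : 0 < εtot := by
    rw [hεtot]
    apply lt_min hγ0
    rw [Finset.lt_inf'_iff]
    intro m hm
    split
    · next h => exact hεf0 m h.1 h.2
    · norm_num
  refine ⟨εtot, hεpos, ?_⟩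
  intro γ hγb
  have hγpos : 0 < γ := by
    have h1 := abs_lt.mp hγb
    have h2 : εtot ≤ γ0 := min_le_left _ _
    linarith [h1.1]
  constructor
  · exact wf_sol_top z γ0 γ
  · intro m h1 h2
    have hmlt : |γ - γ0| < εf m := by
      have h3 : εtot ≤ (Finset.range (n+1)).inf' ⟨0, by simp⟩
          (fun m => if h : 1 ≤ m ∧ m ≤ n then εf m else 1) := min_le_right _ _
      have h4 : (Finset.range (n+1)).inf' ⟨0, by simp⟩
          (fun m => if h : 1 ≤ m ∧ m ≤ n then εf m else 1) ≤ εf m := by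
        have hm : m ∈ Finset.range (n+1) := Finset.mem_range.mpr (by omega)
        have := Finset.inf'_le (fun m => if h : 1 ≤ m ∧ m ≤ n then εf m else 1) hm
        rw [dif_pos ⟨h1, h2⟩] at this
        exact this
      linarith
    exact hεf m h1 h2 γ hmlt (le_of_lt hγpos)

lemma two_point_affine {a b a' b' ρ1 ρ2 : ℝ} (hne : ρ1 ≠ ρ2)
    (h1 : a + ρ1 * b = a' + ρ1 * b') (h2 : a + ρ2 * b = a' + ρ2 * b') :
    ∀ r : ℝ, a + r * b = a' + r * b' := by
  have h3 : (ρ1 - ρ2) * b = (ρ1 - ρ2) * b' := by nlinarith [h1, h2]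
  have hbb : b = b' := mul_left_cancel₀ (sub_ne_zero.mpr hne) h3
  subst hbb
  have haa : a = a' := by linarith
  subst haa
  intro r; rfl

lemma glue_up {f : ℝ → ℝ} {γ0 γ1 a b ε0 : ℝ} (hε0 : 0 < ε0) (h01 : γ0 ≤ γ1)
    (hbase : ∀ δ, |δ - γ0| < ε0 → f δ = a + δ * b)
    (hloc : ∀ γ, γ0 ≤ γ → γ ≤ γ1 → ∃ ε > 0, ∃ a' b' : ℝ, ∀ δ, |δ - γ| < ε → f δ = a' + δ * b') :
    f γ1 = a + γ1 * b := by
  rcases eq_or_lt_of_le h01 with heq | hlt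
  · rw [← heq]
    exact hbase γ0 (by simp [hε0])
  set S := {δ : ℝ | γ0 ≤ δ ∧ δ ≤ γ1 ∧ ∀ ρ, γ0 ≤ ρ → ρ ≤ δ → f ρ = a + ρ * b} with hS
  have hγ0S : γ0 ∈ S := by
    refine ⟨le_refl _, h01, ?_⟩
    intro ρ hρ1 hρ2
    have : ρ = γ0 := le_antisymm hρ2 hρ1
    subst this
    exact hbase ρ (by simp [hε0])
  have hbdd : BddAbove S := ⟨γ1, fun δ hδ => hδ.2.1⟩
  set T := sSup S with hT
  have hTub : T ≤ γ1 := csSup_le ⟨γ0, hγ0S⟩ (fun δ hδ => hδ.2.1)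
  have hTlb : γ0 ≤ T := le_csSup hbdd hγ0S
  have h1 : ∀ ρ, γ0 ≤ ρ → ρ < T → f ρ = a + ρ * b := by
    intro ρ hρ1 hρ2
    obtain ⟨δ, hδS, hρδ⟩ := exists_lt_of_lt_csSup ⟨γ0, hγ0S⟩ hρ2
    exact hδS.2.2 ρ hρ1 (le_of_lt hρδ)
  obtain ⟨ε', hε', a', b', hball⟩ := hloc T hTlb hTub
  have hTgt : γ0 < T := by
    by_contra hc
    push_neg at hc
    have hT0 : T = γ0 := le_antisymm hc hTlb
    set δs := min γ1 (γ0 + ε0/2) with hδs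
    have hδS : δs ∈ S := by
      refine ⟨le_min h01 (by linarith), min_le_left _ _, ?_⟩
      intro ρ hρ1 hρ2
      apply hbase
      have : ρ ≤ γ0 + ε0/2 := le_trans hρ2 (min_le_right _ _)
      rw [abs_lt]
      constructor <;> linarith
    have hle : δs ≤ T := le_csSup hbdd hδS
    have hgt : γ0 < δs := lt_min hlt (by linarith)
    linarith [hT0 ▸ hle]
  set q := max γ0 (T - ε') with hq
  have hqT : q < T := max_lt hTgt (by linarith)
  set ρ1 := (q + T)/2 with hρ1
  set ρ2 := (ρ1 + T)/2 with hρ2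
  have hρ1q : q < ρ1 := by rw [hρ1]; linarith
  have hρ1T : ρ1 < T := by rw [hρ1]; linarith
  have hρ2T : ρ2 < T := by rw [hρ2]; linarith
  have hρ12 : ρ1 < ρ2 := by rw [hρ2]; linarith
  have hγ0ρ1 : γ0 ≤ ρ1 := le_trans (le_trans (le_max_left _ _) (le_of_lt hρ1q)) (le_refl _)
  have hγ0ρ2 : γ0 ≤ ρ2 := by linarith
  have hballρ : ∀ ρ, q < ρ → ρ < T → |ρ - T| < ε' := by
    intro ρ hq' hT'
    have : T - ε' ≤ q := le_max_right _ _
    rw [abs_lt]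
    constructor <;> linarith
  have hfρ1 : a + ρ1 * b = a' + ρ1 * b' := by
    rw [← h1 ρ1 hγ0ρ1 hρ1T, hball ρ1 (hballρ ρ1 hρ1q hρ1T)]
  have hfρ2 : a + ρ2 * b = a' + ρ2 * b' := by
    rw [← h1 ρ2 hγ0ρ2 hρ2T, hball ρ2 (hballρ ρ2 (by linarith) hρ2T)]
  have hkey := two_point_affine (ne_of_lt hρ12) hfρ1 hfρ2
  have hTγ1 : T = γ1 := by
    by_contra hc
    have hTlt : T < γ1 := lt_of_le_of_ne hTub hc
    set δs := min γ1 (T + ε'/2) with hδs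
    have hδS : δs ∈ S := by
      refine ⟨le_trans hTlb (le_min (le_of_lt hTlt) (by linarith)), min_le_left _ _, ?_⟩
      intro ρ hρ1' hρ2'
      rcases lt_or_ge ρ T with h | h
      · exact h1 ρ hρ1' h
      · have hρup : ρ ≤ T + ε'/2 := le_trans hρ2' (min_le_right _ _)
        have : |ρ - T| < ε' := by rw [abs_lt]; constructor <;> linarith
        rw [hball ρ this]
        exact (hkey ρ).symm
    have hle : δs ≤ T := le_csSup hbdd hδS
    have : T < δs := lt_min hTlt (by linarith)
    linarith
  rw [← hTγ1]
  rw [hball T (by simp [hε'])]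
  exact (hkey T).symm

lemma glue_down {f : ℝ → ℝ} {γ0 γ1 a b ε0 : ℝ} (hε0 : 0 < ε0) (h10 : γ1 ≤ γ0)
    (hbase : ∀ δ, |δ - γ0| < ε0 → f δ = a + δ * b)
    (hloc : ∀ γ, γ1 ≤ γ → γ ≤ γ0 → ∃ ε > 0, ∃ a' b' : ℝ, ∀ δ, |δ - γ| < ε → f δ = a' + δ * b') :
    f γ1 = a + γ1 * b := by
  have h := glue_up (f := fun δ => f (-δ)) (γ0 := -γ0) (γ1 := -γ1) (a := a) (b := -b)
    (ε0 := ε0) hε0 (by linarith) ?_ ?_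
  · have : f (-(-γ1)) = a + (-γ1) * (-b) := h
    rw [neg_neg] at this
    rw [this]; ring
  · intro δ hδ
    have habs : |(-δ) - γ0| < ε0 := by
      have : (-δ) - γ0 = -(δ - (-γ0)) := by ring
      rw [this, abs_neg]
      exact hδ
    show f (-δ) = a + δ * -b
    rw [hbase (-δ) habs]
    ring
  · intro γ hγ1 hγ2
    obtain ⟨ε, hεp, a', b', hb⟩ := hloc (-γ) (by linarith) (by linarith)
    refine ⟨ε, hεp, a', -b', ?_⟩
    intro δ hδ
    have habs : |(-δ) - (-γ)| < ε := by
      have : (-δ) - (-γ) = -(δ - γ) := by ring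
      rw [this, abs_neg]
      exact hδ
    show f (-δ) = a' + δ * -b'
    rw [hb (-δ) habs]
    ring

lemma glue_interval {f : ℝ → ℝ} {I : Set ℝ}
    (hconv : ∀ u v : ℝ, u ∈ I → v ∈ I → Set.Icc u v ⊆ I) (hne : I.Nonempty)
    (hloc : ∀ γ ∈ I, ∃ ε > 0, ∃ a b : ℝ, ∀ δ, |δ - γ| < ε → f δ = a + δ * b) :
    ∃ a b : ℝ, ∀ γ ∈ I, f γ = a + γ * b := by
  obtain ⟨γ0, hγ0⟩ := hne
  obtain ⟨ε0, hε0, a, b, hbase⟩ := hloc γ0 hγ0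
  refine ⟨a, b, ?_⟩
  intro γ hγ
  rcases le_total γ0 γ with h | h
  · apply glue_up hε0 h hbase
    intro δ h1 h2
    exact hloc δ (hconv γ0 γ hγ0 hγ ⟨h1, h2⟩)
  · apply glue_down hε0 h hbase
    intro δ h1 h2
    exact hloc δ (hconv γ γ0 hγ hγ0 ⟨h1, h2⟩)

lemma gmax_conv (i j : ℕ) (si sj : ℝ) :
    ∀ a b c : ℝ, a < b → b < c →
      gmax n y α i j si sj b * (c - a)
        ≤ gmax n y α i j si sj a * (c - b) + gmax n y α i j si sj c * (b - a) :=
  fun _ _ _ hab hbc => gmax_three i j si sj hab hbc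

noncomputable def badp (n : ℕ) (y : Fin (n + 1) → ℝ) (α : Fin n → ℝ)
    (i j : ℕ) (si sj : ℝ) : ℝ × ℝ :=
  ⟨(bad_two (gmax_conv (n := n) (y := y) (α := α) i j si sj)).choose,
   (bad_two (gmax_conv (n := n) (y := y) (α := α) i j si sj)).choose_spec.choose⟩

lemma badp_spec (i j : ℕ) (si sj : ℝ) :
    Bad (gmax n y α i j si sj) ⊆ {(badp n y α i j si sj).1, (badp n y α i j si sj).2} :=
  (bad_two (gmax_conv (n := n) (y := y) (α := α) i j si sj)).choose_spec.choose_spec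

def Qset (n : ℕ) : Finset (ℕ × ℕ) :=
  (Finset.range (n+2)).biUnion (fun i => (Finset.Ico (i+2) (n+2)).image (fun j => (i, j)))

lemma mem_Qset {n i j : ℕ} (h1 : i + 1 < j) (h2 : j ≤ n + 1) : (i, j) ∈ Qset n := by
  unfold Qset
  rw [Finset.mem_biUnion]
  refine ⟨i, Finset.mem_range.mpr (by omega), ?_⟩
  rw [Finset.mem_image]
  exact ⟨j, Finset.mem_Ico.mpr ⟨by omega, by omega⟩, rfl⟩

lemma choose_two_mul (n : ℕ) : Nat.choose (n+1) 2 * 2 = (n+1) * n := by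
  induction n with
  | zero => rfl
  | succ m IH =>
    have hs : Nat.choose (m+2) 2 = Nat.choose (m+1) 1 + Nat.choose (m+1) 2 :=
      Nat.choose_succ_succ (m+1) 1
    rw [hs, Nat.choose_one_right, add_mul, IH]
    ring

lemma Qset_card (n : ℕ) : (Qset n).card ≤ Nat.choose (n+1) 2 := by
  have h1 : (Qset n).card ≤ ∑ i ∈ Finset.range (n+2), ((Finset.Ico (i+2) (n+2)).image
      (fun j => (i, j))).card := Finset.card_biUnion_le
  have h2 : ∀ i ∈ Finset.range (n+2), ((Finset.Ico (i+2) (n+2)).image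
      (fun j => (i, j))).card ≤ n - i := by
    intro i _
    calc ((Finset.Ico (i+2) (n+2)).image (fun j => (i, j))).card
        ≤ (Finset.Ico (i+2) (n+2)).card := Finset.card_image_le
      _ = n - i := by rw [Nat.card_Ico]; omega
  have h3 : (Qset n).card ≤ ∑ i ∈ Finset.range (n+2), (n - i) :=
    le_trans h1 (Finset.sum_le_sum h2)
  have h4 : ∑ i ∈ Finset.range (n+2), (n - i) = ∑ i ∈ Finset.range (n+1), (n - i) := by
    rw [Finset.sum_range_succ, Nat.sub_eq_zero_of_le (by omega), add_zero]
  have h5 : ∑ i ∈ Finset.range (n+1), (n - i) = ∑ i ∈ Finset.range (n+1), i := by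
    have := Finset.sum_range_reflect (fun i => i) (n+1)
    rw [← this]
    apply Finset.sum_congr rfl
    intro i hi
    simp at hi
    omega
  have h6 : (∑ i ∈ Finset.range (n+1), i) * 2 = (n+1) * n := by
    rw [Finset.sum_range_id_mul_two]
    simp
  have h8 : ∑ i ∈ Finset.range (n+1), i = Nat.choose (n+1) 2 :=
    Nat.eq_of_mul_eq_mul_right (by omega) (h6.trans (choose_two_mul n).symm)
  omega

def sVal (b : Bool) : ℝ := if b then 1 else -1

lemma sVal_pm (b : Bool) : sVal b = 1 ∨ sVal b = -1 := by
  cases b <;> simp [sVal]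

noncomputable def PF (n : ℕ) (y : Fin (n + 1) → ℝ) (α : Fin n → ℝ) : Finset ℝ :=
  ((Qset n) ×ˢ (Finset.univ : Finset (Bool × Bool))).biUnion
    (fun q => {(badp n y α q.1.1 q.1.2 (sVal q.2.1) (sVal q.2.2)).1,
               (badp n y α q.1.1 q.1.2 (sVal q.2.1) (sVal q.2.2)).2})

lemma PF_card : (PF n y α).card ≤ 8 * Nat.choose (n+1) 2 := by
  have h1 : (PF n y α).card ≤ ∑ _q ∈ (Qset n) ×ˢ (Finset.univ : Finset (Bool × Bool)), 2 := by
    apply le_trans Finset.card_biUnion_le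
    apply Finset.sum_le_sum
    intro q _
    apply le_trans (Finset.card_insert_le _ _)
    simp
  rw [Finset.sum_const, smul_eq_mul, Finset.card_product] at h1
  have h2 : (Finset.univ : Finset (Bool × Bool)).card = 4 := by decide
  rw [h2] at h1
  calc (PF n y α).card ≤ (Qset n).card * 4 * 2 := h1
    _ ≤ Nat.choose (n+1) 2 * 4 * 2 := by
        apply Nat.mul_le_mul_right
        apply Nat.mul_le_mul_right
        exact Qset_card n
    _ = 8 * Nat.choose (n+1) 2 := by ring

lemma notin_PF_bad {γ0 : ℝ} (hγ0 : γ0 ∉ PF n y α) :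
    ∀ i j : ℕ, ∀ si sj : ℝ, i + 1 < j → j ≤ n + 1 →
      (si = 1 ∨ si = -1) → (sj = 1 ∨ sj = -1) → γ0 ∉ Bad (gmax n y α i j si sj) := by
  intro i j si sj hij hjn hsi hsj hmem
  apply hγ0
  unfold PF
  rw [Finset.mem_biUnion]
  have hbi : ∃ bi : Bool, si = sVal bi := by
    rcases hsi with h | h
    · exact ⟨true, by simp [sVal, h]⟩
    · exact ⟨false, by simp [sVal, h]⟩
  have hbj : ∃ bj : Bool, sj = sVal bj := by
    rcases hsj with h | h
    · exact ⟨true, by simp [sVal, h]⟩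
    · exact ⟨false, by simp [sVal, h]⟩
  obtain ⟨bi, hbi⟩ := hbi
  obtain ⟨bj, hbj⟩ := hbj
  refine ⟨((i, j), (bi, bj)), ?_, ?_⟩
  · rw [Finset.mem_product]
    exact ⟨mem_Qset hij hjn, Finset.mem_univ _⟩
  · have hsp := badp_spec (n := n) (y := y) (α := α) i j si sj hmem
    simp only [Set.mem_insert_iff, Set.mem_singleton_iff] at hsp
    rw [← hbi, ← hbj]
    simp only [Finset.mem_insert, Finset.mem_singleton]
    exact hsp

lemma path_piece (hα : ∀ t, 0 ≤ α t) {X : ℝ → ℕ → ℝ}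
    (hXmin : ∀ γ, 0 ≤ γ → IsMin n y α γ (X γ))
    {γ0 : ℝ} (hγ0 : 0 < γ0) (hPF : γ0 ∉ PF n y α) :
    ∃ ε > 0, ∃ A B : ℕ → ℝ, ∀ γ, |γ - γ0| < ε → ∀ u, u < n+1 → X γ u = A u + γ * B u := by
  obtain ⟨ε, hε, hkkt⟩ := local_kkt hα hγ0 (hXmin γ0 (le_of_lt hγ0)) (notin_PF_bad hPF)
  refine ⟨min ε γ0, lt_min hε hγ0, solA n y α (X γ0) γ0, solB n y α (X γ0) γ0, ?_⟩
  intro γ hγb u hu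
  have hγb2 : |γ - γ0| < γ0 := lt_of_lt_of_le hγb (min_le_right _ _)
  have hγpos : 0 < γ := by
    have := (abs_lt.mp hγb2).1
    linarith
  have hk := hkkt γ (lt_of_lt_of_le hγb (min_le_left _ _))
  have hsolmin : IsMin n y α γ (sol n y α (X γ0) γ0 γ) := by
    intro v
    have h1 := isMin_of_kkt hα (le_of_lt hγpos) hk v
    have h2 : 0 ≤ ∑ u ∈ range (n+1), (v u - sol n y α (X γ0) γ0 γ u)^2 :=
      Finset.sum_nonneg (fun u _ => sq_nonneg _)
    linarith
  have heq := isMin_unique hα (le_of_lt hγpos) hsolmin (hXmin γ (le_of_lt hγpos)) u hu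
  rw [← heq, sol_affine]

lemma endpoint_eq {f : ℝ → ℝ} {c a b H : ℝ} (hH : 0 ≤ H)
    (happ : ∀ η, 0 < η → ∃ γ, |γ - c| < η ∧ f γ = a + γ * b ∧ (f γ - f c)^2 ≤ H * |γ - c|) :
    f c = a + c * b := by
  by_contra hne
  set d := f c - (a + c * b) with hd
  have hdne : d ≠ 0 := fun h => hne (by rw [hd] at h; linarith [sub_eq_zero.mp h])
  have hd2 : 0 < d^2 := by positivity
  have hdabs : 0 < |d| := abs_pos.mpr hdne
  set η := min (d^2/(4*H+1)) (|d|/(2*|b|+1)) with hη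
  have hηpos : 0 < η := by
    apply lt_min <;> positivity
  obtain ⟨γ, hγη, hγf, hγc⟩ := happ η hηpos
  set e := γ - c with he
  have he1 : |e| < d^2/(4*H+1) := lt_of_lt_of_le hγη (min_le_left _ _)
  have he2 : |e| < |d|/(2*|b|+1) := lt_of_lt_of_le hγη (min_le_right _ _)
  have hfd : f γ - f c = e * b - d := by
    rw [hγf, hd, he]; ring
  have h1 : |e * b| ≤ |d|/2 := by
    rw [abs_mul]
    have hb1 : (0:ℝ) < 2*|b|+1 := by positivity
    have : |e| * |b| ≤ (|d|/(2*|b|+1)) * |b| :=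
      mul_le_mul_of_nonneg_right (le_of_lt he2) (abs_nonneg b)
    calc |e| * |b| ≤ (|d|/(2*|b|+1)) * |b| := this
      _ ≤ |d|/2 := by
        rw [div_mul_eq_mul_div, div_le_div_iff₀ hb1 (by norm_num)]
        nlinarith [abs_nonneg d, abs_nonneg b]
  have h2 : |d|/2 ≤ |e * b - d| := by
    have := abs_sub_abs_le_abs_sub d (e*b)
    have habs : |d - e*b| = |e*b - d| := abs_sub_comm _ _
    linarith
  have h3 : (|d|/2)^2 ≤ (e*b - d)^2 := by
    rw [← sq_abs (e*b - d)]
    apply pow_le_pow_left₀ (by positivity) h2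
  have h4 : (e*b - d)^2 ≤ H * |e| := by rw [← hfd]; exact hγc
  have h5 : H * |e| < d^2/4 := by
    rcases eq_or_lt_of_le hH with h | h
    · rw [← h]; simp; positivity
    · have : H * |e| < H * (d^2/(4*H+1)) := mul_lt_mul_of_pos_left he1 h
      have h6 : H * (d^2/(4*H+1)) < d^2/4 := by
        have hp : (0:ℝ) < 4*H+1 := by positivity
        have heq : H * (d^2/(4*H+1)) = (H*d^2)/(4*H+1) := by ring
        rw [heq, div_lt_div_iff₀ hp (by norm_num : (0:ℝ) < 4)]
        nlinarith
      linarith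
  have h7 : (|d|/2)^2 = d^2/4 := by
    rw [div_pow, sq_abs]
    norm_num
  have hcon : d^2/4 < d^2/4 := by
    calc d^2/4 = (|d|/2)^2 := h7.symm
      _ ≤ (e*b - d)^2 := h3
      _ ≤ H * |e| := h4
      _ < d^2/4 := h5
  exact lt_irrefl _ hcon

lemma piece_affine (hα : ∀ t, 0 ≤ α t) {X : ℝ → ℕ → ℝ}
    (hXmin : ∀ γ, 0 ≤ γ → IsMin n y α γ (X γ))
    {I : Set ℝ} (hconv : ∀ u v : ℝ, u ∈ I → v ∈ I → Set.Icc u v ⊆ I) (hne : I.Nonempty)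
    (hpos : ∀ γ ∈ I, 0 < γ) (hnPF : ∀ γ ∈ I, γ ∉ PF n y α) :
    ∃ A B : ℕ → ℝ, ∀ γ ∈ I, ∀ u, u < n+1 → X γ u = A u + γ * B u := by
  have hU : ∀ u, ∃ a b : ℝ, ∀ γ ∈ I, u < n+1 → X γ u = a + γ * b := by
    intro u
    by_cases hu : u < n+1
    · have hgl := glue_interval (f := fun γ => X γ u) hconv hne ?_
      · obtain ⟨a, b, h⟩ := hgl
        exact ⟨a, b, fun γ hγ _ => h γ hγ⟩
      · intro γ hγ
        obtain ⟨ε, hε, A, B, hball⟩ := path_piece hα hXmin (hpos γ hγ) (hnPF γ hγ)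
        exact ⟨ε, hε, A u, B u, fun δ hδ => hball δ hδ u hu⟩
    · exact ⟨0, 0, fun γ _ hu' => absurd hu' hu⟩
  choose A B hAB using hU
  exact ⟨A, B, fun γ hγ u hu => hAB u γ hγ hu⟩

lemma endpoint_extend (hα : ∀ t, 0 ≤ α t) {X : ℝ → ℕ → ℝ}
    (hXmin : ∀ γ, 0 ≤ γ → IsMin n y α γ (X γ)) {cp : ℝ} (hcp : 0 ≤ cp)
    {A B : ℕ → ℝ}
    (happrox : ∀ η, 0 < η → ∃ γ, 0 ≤ γ ∧ |γ - cp| < η ∧ ∀ u, u < n+1 → X γ u = A u + γ * B u) :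
    ∀ u, u < n+1 → X cp u = A u + cp * B u := by
  intro u hu
  apply endpoint_eq (f := fun γ => X γ u) (H := 8 * Pen n α (yv n y))
    (mul_nonneg (by norm_num) (pen_nonneg hα _))
  intro η hη
  obtain ⟨γ, hγ0, hγη, hγA⟩ := happrox η hη
  refine ⟨γ, hγη, hγA u hu, ?_⟩
  have hsum := cont_est hα hcp hγ0 (hXmin cp hcp) (hXmin γ hγ0)
  have hsingle : (X γ u - X cp u)^2 ≤ ∑ w ∈ range (n+1), (X γ w - X cp w)^2 := by
    apply Finset.single_le_sum (fun w _ => sq_nonneg (X γ w - X cp w))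
      (Finset.mem_range.mpr hu)
  have habs : |cp - γ| = |γ - cp| := abs_sub_comm _ _
  calc (X γ u - X cp u)^2 ≤ ∑ w ∈ range (n+1), (X γ w - X cp w)^2 := hsingle
    _ ≤ 8 * |cp - γ| * Pen n α (yv n y) := hsum
    _ = 8 * Pen n α (yv n y) * |γ - cp| := by rw [habs]; ring

lemma icc_affine (hα : ∀ t, 0 ≤ α t) {X : ℝ → ℕ → ℝ}
    (hXmin : ∀ γ, 0 ≤ γ → IsMin n y α γ (X γ)) {L R : ℝ} (hL0 : 0 ≤ L) (hLR : L < R)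
    {A B : ℕ → ℝ} (hAB : ∀ γ ∈ Set.Ioo L R, ∀ u, u < n+1 → X γ u = A u + γ * B u) :
    ∀ γ ∈ Set.Icc L R, ∀ u, u < n+1 → X γ u = A u + γ * B u := by
  intro γ hγ u hu
  rcases eq_or_lt_of_le hγ.1 with h1 | h1
  · rw [← h1]
    apply endpoint_extend hα hXmin hL0 ?_ u hu
    intro η hη
    set p := min (L + η/2) ((L+R)/2) with hp
    have hp1 : L < p := lt_min (by linarith) (by linarith)
    have hp2 : p < R := lt_of_le_of_lt (min_le_right _ _) (by linarith)
    refine ⟨p, by linarith, ?_, fun w hw => hAB p ⟨hp1, hp2⟩ w hw⟩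
    have hple : p ≤ L + η/2 := min_le_left _ _
    rw [abs_lt]
    constructor <;> linarith
  · rcases eq_or_lt_of_le hγ.2 with h2 | h2
    · rw [h2]
      have hR0 : 0 ≤ R := le_trans hL0 (le_of_lt hLR)
      apply endpoint_extend hα hXmin hR0 ?_ u hu
      intro η hη
      set p := max (R - η/2) ((L+R)/2) with hp
      have hp1 : L < p := lt_of_lt_of_le (by linarith) (le_max_right _ _)
      have hp2 : p < R := max_lt (by linarith) (by linarith)
      refine ⟨p, by linarith, ?_, fun w hw => hAB p ⟨hp1, hp2⟩ w hw⟩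
      have hple : R - η/2 ≤ p := le_max_left _ _
      rw [abs_lt]
      constructor <;> linarith
    · exact hAB γ ⟨h1, h2⟩ u hu

lemma ici_affine (hα : ∀ t, 0 ≤ α t) {X : ℝ → ℕ → ℝ}
    (hXmin : ∀ γ, 0 ≤ γ → IsMin n y α γ (X γ)) {L : ℝ} (hL0 : 0 ≤ L)
    {A B : ℕ → ℝ} (hAB : ∀ γ ∈ Set.Ioi L, ∀ u, u < n+1 → X γ u = A u + γ * B u) :
    ∀ γ ∈ Set.Ici L, ∀ u, u < n+1 → X γ u = A u + γ * B u := by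
  intro γ hγ u hu
  rcases eq_or_lt_of_le (Set.mem_Ici.mp hγ) with h1 | h1
  · rw [← h1]
    apply endpoint_extend hα hXmin hL0 ?_ u hu
    intro η hη
    refine ⟨L + η/2, by linarith, ?_, fun w hw => hAB (L + η/2) (by simp; linarith) w hw⟩
    rw [abs_lt]
    constructor <;> linarith
  · exact hAB γ h1 u hu

end FL

/-- The solution path of the weighted 1-D fused lasso has at most
`8·C(n+1,2) + 1 = O(n²)` distinct linear segments: the half line `[0,∞)` splits into
consecutive intervals on each of which `γ ↦ x*(γ)` is affine in `γ`. -/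
theorem weighted_fused_lasso_quadratic_segments (n : ℕ)
    (y : Fin (n + 1) → ℝ) (α : Fin n → ℝ) (hα : ∀ t, 0 ≤ α t)
    (x : ℝ → Fin (n + 1) → ℝ)
    (hx : ∀ γ, 0 ≤ γ → ∀ v, fusedObj n y α γ (x γ) ≤ fusedObj n y α γ v) :
    ∃ (k : ℕ) (c : Fin (k + 1) → ℝ),
      k + 1 ≤ 8 * Nat.choose (n + 1) 2 + 1 ∧
      c 0 = 0 ∧ StrictMono c ∧
      (∀ i : Fin k, ∃ a b : Fin (n + 1) → ℝ,
        ∀ γ ∈ Set.Icc (c i.castSucc) (c i.succ), ∀ t, x γ t = a t + γ * b t) ∧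
      (∃ a b : Fin (n + 1) → ℝ,
        ∀ γ ∈ Set.Ici (c (Fin.last k)), ∀ t, x γ t = a t + γ * b t) := by
  classical
  set X : ℝ → ℕ → ℝ := fun γ u => if h : u < n+1 then x γ ⟨u, h⟩ else 0 with hX
  have hXrestrict : ∀ γ, (fun t : Fin (n+1) => X γ t.val) = x γ := by
    intro γ
    funext t
    simp only [hX, t.isLt, dif_pos]
  have hxX : ∀ γ (t : Fin (n+1)), x γ t = X γ t.val := by
    intro γ t
    rw [← hXrestrict γ]
  have hXmin : ∀ γ, 0 ≤ γ → FL.IsMin n y α γ (X γ) := by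
    intro γ hγ v
    rw [FL.obj_eq_fusedObj, FL.obj_eq_fusedObj, hXrestrict]
    exact hx γ hγ (fun t => v t.val)
  set F : Finset ℝ := insert (0:ℝ) ((FL.PF n y α).filter (fun γ => 0 < γ)) with hF
  have hFne : F.Nonempty := ⟨0, Finset.mem_insert_self _ _⟩
  have hFnonneg : ∀ z ∈ F, (0:ℝ) ≤ z := by
    intro z hz
    rcases Finset.mem_insert.mp hz with h | h
    · rw [h]
    · exact le_of_lt (Finset.mem_filter.mp h).2
  set k := F.card - 1 with hk
  have hcard : F.card = k + 1 := by
    have := Finset.card_pos.mpr hFne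
    omega
  have hkb : k + 1 ≤ 8 * Nat.choose (n+1) 2 + 1 := by
    have h1 : F.card ≤ ((FL.PF n y α).filter (fun γ => 0 < γ)).card + 1 :=
      Finset.card_insert_le _ _
    have h2 : ((FL.PF n y α).filter (fun γ => 0 < γ)).card ≤ (FL.PF n y α).card :=
      Finset.card_filter_le _ _
    have h3 := FL.PF_card (n := n) (y := y) (α := α)
    omega
  set c : Fin (k+1) → ℝ := fun i => F.orderEmbOfFin hcard i with hc
  have hmono : StrictMono c := (F.orderEmbOfFin hcard).strictMono
  have hrange : Set.range c = (F : Set ℝ) := F.range_orderEmbOfFin hcard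
  have hcmem : ∀ i, c i ∈ F := fun i => F.orderEmbOfFin_mem hcard i
  have hc0 : c 0 = 0 := by
    have h0r : ∃ m, c m = 0 := by
      have h0F : (0:ℝ) ∈ (F : Set ℝ) := Finset.mem_coe.mpr (Finset.mem_insert_self _ _)
      rw [← hrange] at h0F
      exact h0F
    obtain ⟨m, hm⟩ := h0r
    have h1 : c 0 ≤ c m := hmono.le_iff_le.mpr (Fin.zero_le m)
    have h2 : 0 ≤ c 0 := hFnonneg _ (hcmem 0)
    rw [hm] at h1
    linarith
  have hgap : ∀ γ : ℝ, 0 < γ → (∀ m, c m ≠ γ) → γ ∉ FL.PF n y α := by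
    intro γ hγpos hγr hmem
    have hγF : γ ∈ (F : Set ℝ) :=
      Finset.mem_coe.mpr (Finset.mem_insert_of_mem (Finset.mem_filter.mpr ⟨hmem, hγpos⟩))
    rw [← hrange] at hγF
    obtain ⟨m, hm⟩ := hγF
    exact hγr m hm
  have hcnonneg : ∀ i, 0 ≤ c i := fun i => hFnonneg _ (hcmem i)
  refine ⟨k, c, hkb, hc0, hmono, ?_, ?_⟩
  · intro i
    set L := c i.castSucc with hL
    set R := c i.succ with hR
    have hLR : L < R := hmono (Fin.castSucc_lt_succ (i := i))
    have hL0 : 0 ≤ L := hcnonneg _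
    have hIoo : ∃ A B : ℕ → ℝ, ∀ γ ∈ Set.Ioo L R, ∀ u, u < n+1 → X γ u = A u + γ * B u := by
      apply FL.piece_affine hα hXmin
      · intro u v hu hv w hw
        exact ⟨lt_of_lt_of_le hu.1 hw.1, lt_of_le_of_lt hw.2 hv.2⟩
      · exact ⟨(L+R)/2, by constructor <;> [skip; skip] <;> [linarith; linarith]⟩
      · intro γ hγ
        exact lt_of_le_of_lt hL0 hγ.1
      · intro γ hγ
        apply hgap γ (lt_of_le_of_lt hL0 hγ.1)
        intro m hm
        have h1 : i.castSucc < m := by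
          apply hmono.lt_iff_lt.mp
          rw [hm]
          exact hγ.1
        have h2 : m < i.succ := by
          apply hmono.lt_iff_lt.mp
          rw [hm]
          exact hγ.2
        rw [Fin.lt_iff_val_lt_val] at h1 h2
        simp [Fin.val_succ] at h1 h2
        omega
    obtain ⟨A, B, hAB⟩ := hIoo
    have hIcc := FL.icc_affine hα hXmin hL0 hLR hAB
    refine ⟨fun t => A t.val, fun t => B t.val, ?_⟩
    intro γ hγ t
    rw [hxX γ t]
    exact hIcc γ hγ t.val t.isLt
  · set L := c (Fin.last k) with hL
    have hL0 : 0 ≤ L := hcnonneg _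
    have hIoi : ∃ A B : ℕ → ℝ, ∀ γ ∈ Set.Ioi L, ∀ u, u < n+1 → X γ u = A u + γ * B u := by
      apply FL.piece_affine hα hXmin
      · intro u v hu hv w hw
        exact lt_of_lt_of_le hu hw.1
      · exact ⟨L + 1, by simp⟩
      · intro γ hγ
        exact lt_of_le_of_lt hL0 hγ
      · intro γ hγ
        apply hgap γ (lt_of_le_of_lt hL0 hγ)
        intro m hm
        have h1 : Fin.last k < m := by
          apply hmono.lt_iff_lt.mp
          rw [hm]
          exact hγ
        exact absurd h1 (not_lt.mpr (Fin.le_last m))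
    obtain ⟨A, B, hAB⟩ := hIoi
    have hIci := FL.ici_affine hα hXmin hL0 hAB
    refine ⟨fun t => A t.val, fun t => B t.val, ?_⟩
    intro γ hγ t
    rw [hxX γ t]
    exact hIci γ hγ t.val t.isLt
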